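/- arXiv:1711.09628 — 12 statements merged into one kernel-verified Lean document; each statement's English description precedes it below -/
import Mathlib

section
/- Let F be a class of probability measures on an observation space Ω, and let T : F → ℝ^k be an elicitable functional admitting a strictly F-consistent scoring function S : ℝ^k × Ω → ℝ such that for every F ∈ F the expected score x ↦ S̄(x,F) := E_F[S(x,Y)] is continuous on ℝ^k. Then T is mixture-continuous on every subclass F₀ ⊆ F such that F₀ is convex (closed under mixtures (1−λ)F + λG, λ ∈ [0,1]) and the image T(F₀) is bounded; that is, for all F, G ∈ F₀ the map [0,1] → ℝ^k, λ ↦ T((1−λ)F + λG), is continuous. -/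
open MeasureTheory ENNReal

noncomputable def escore {α Ω : Type*} [MeasurableSpace Ω]
    (S : α → Ω → ℝ) (x : α) (F : Measure Ω) : ℝ :=
  ∫ y, S x y ∂F

/-- The mixture `(1 - lam) • F + lam • G` of two measures. -/
noncomputable def mix {Ω : Type*} [MeasurableSpace Ω]
    (F G : Measure Ω) (lam : ℝ) : Measure Ω :=
  ENNReal.ofReal (1 - lam) • F + ENNReal.ofReal lam • G

/-- The class `𝓕` is convex (closed under mixtures). -/
def MixConvex {Ω : Type*} [MeasurableSpace Ω] (𝓕 : Set (Measure Ω)) : Prop :=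
  ∀ F ∈ 𝓕, ∀ G ∈ 𝓕, ∀ lam ∈ Set.Icc (0:ℝ) 1, mix F G lam ∈ 𝓕

/-- `S` is an `𝓕`-consistent scoring function for `T` on the action domain `A`. -/
def Consistent {α Ω : Type*} [MeasurableSpace Ω]
    (𝓕 : Set (Measure Ω)) (A : Set α) (T : Measure Ω → α) (S : α → Ω → ℝ) : Prop :=
  ∀ F ∈ 𝓕, ∀ x ∈ A, escore S (T F) F ≤ escore S x F

/-- `S` is a strictly `𝓕`-consistent scoring function for `T` on the action domain `A`. -/
def StrictlyConsistent {α Ω : Type*} [MeasurableSpace Ω]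
    (𝓕 : Set (Measure Ω)) (A : Set α) (T : Measure Ω → α) (S : α → Ω → ℝ) : Prop :=
  Consistent 𝓕 A T S ∧
    ∀ F ∈ 𝓕, ∀ x ∈ A, escore S x F = escore S (T F) F → x = T F

/-- `T` is mixture-continuous: `fun lam => T ((1-lam) • F + lam • G)` is continuous on `[0,1]`. -/
def MixContinuous {Ω : Type*} [MeasurableSpace Ω] {k : ℕ}
    (𝓕 : Set (Measure Ω)) (T : Measure Ω → (Fin k → ℝ)) : Prop :=
  ∀ F ∈ 𝓕, ∀ G ∈ 𝓕, ContinuousOn (fun lam => T (mix F G lam)) (Set.Icc (0:ℝ) 1)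

lemma escore_mix {α Ω : Type*} [MeasurableSpace Ω] {S : α → Ω → ℝ} {x : α}
    {F G : Measure Ω} {lam : ℝ} (hF : Integrable (S x) F) (hG : Integrable (S x) G)
    (h0 : 0 ≤ lam) (h1 : lam ≤ 1) :
    escore S x (mix F G lam) = (1 - lam) * escore S x F + lam * escore S x G := by
  have hF' : Integrable (S x) (ENNReal.ofReal (1 - lam) • F) :=
    hF.smul_measure ofReal_ne_top
  have hG' : Integrable (S x) (ENNReal.ofReal lam • G) :=
    hG.smul_measure ofReal_ne_top
  rw [escore, mix, integral_add_measure hF' hG', integral_smul_measure, integral_smul_measure,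
    toReal_ofReal (by linarith), toReal_ofReal h0]
  rfl

/-- If `T` is elicitable with a strictly `𝓕`-consistent scoring function `S`
whose expected score `x ↦ S̄(x,F)` is continuous on `ℝ^k` for every `F ∈ 𝓕`, then `T` is
mixture-continuous on every convex subclass `𝓕₀ ⊆ 𝓕` whose image `T '' 𝓕₀` is bounded. -/
theorem statement0 {Ω : Type*} [MeasurableSpace Ω] {k : ℕ}
    (𝓕 : Set (Measure Ω)) (hprob : ∀ F ∈ 𝓕, IsProbabilityMeasure F)
    (T : Measure Ω → (Fin k → ℝ)) (S : (Fin k → ℝ) → Ω → ℝ)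
    (hSint : ∀ (x : Fin k → ℝ), ∀ F ∈ 𝓕, Integrable (S x) F)
    (hS : StrictlyConsistent 𝓕 Set.univ T S)
    (hcont : ∀ F ∈ 𝓕, Continuous fun x => escore S x F)
    (𝓕₀ : Set (Measure Ω)) (hsub : 𝓕₀ ⊆ 𝓕) (hconv : MixConvex 𝓕₀)
    (hbdd : Bornology.IsBounded (T '' 𝓕₀)) :
    ∀ F ∈ 𝓕₀, ∀ G ∈ 𝓕₀,
      ContinuousOn (fun lam => T (mix F G lam)) (Set.Icc (0:ℝ) 1) := by
  obtain ⟨hcons, huniq⟩ := hS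
  intro F hF G hG
  have hVcont : Continuous (fun p : (Fin k → ℝ) × ℝ =>
      (1 - p.2) * escore S p.1 F + p.2 * escore S p.1 G) := by
    have h1 := hcont F (hsub hF)
    have h2 := hcont G (hsub hG)
    fun_prop
  have hmixmem : ∀ t ∈ Set.Icc (0:ℝ) 1, mix F G t ∈ 𝓕₀ := fun t ht =>
    hconv F hF G hG t ht
  have hEform : ∀ (x : Fin k → ℝ), ∀ t ∈ Set.Icc (0:ℝ) 1,
      escore S x (mix F G t) = (1 - t) * escore S x F + t * escore S x G :=
    fun x t ht => escore_mix (hSint x F (hsub hF)) (hSint x G (hsub hG)) ht.1 ht.2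
  have hK : IsCompact (closure (T '' 𝓕₀)) :=
    Metric.isCompact_of_isClosed_isBounded isClosed_closure hbdd.closure
  have key : ∀ (v : ℕ → ℝ), (∀ n, v n ∈ Set.Icc (0:ℝ) 1) → ∀ t0 ∈ Set.Icc (0:ℝ) 1,
      Filter.Tendsto v Filter.atTop (nhds t0) →
      Filter.Tendsto (fun n => T (mix F G (v n))) Filter.atTop (nhds (T (mix F G t0))) := by
    intro v hv t0 ht0 hvt
    apply Filter.tendsto_of_subseq_tendsto
    intro ns hns
    have hmem : ∀ n, T (mix F G (v (ns n))) ∈ closure (T '' 𝓕₀) := fun n =>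
      subset_closure (Set.mem_image_of_mem T (hmixmem _ (hv _)))
    obtain ⟨y, hy, φ, hφ, hyt⟩ := hK.tendsto_subseq hmem
    refine ⟨φ, ?_⟩
    have hvφ : Filter.Tendsto (fun n => v (ns (φ n))) Filter.atTop (nhds t0) :=
      hvt.comp (hns.comp hφ.tendsto_atTop)
    have hVlim : Filter.Tendsto (fun n =>
        (1 - v (ns (φ n))) * escore S (T (mix F G (v (ns (φ n))))) F
          + (v (ns (φ n))) * escore S (T (mix F G (v (ns (φ n))))) G)
        Filter.atTop (nhds ((1 - t0) * escore S y F + t0 * escore S y G)) :=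
      (hVcont.tendsto (y, t0)).comp (hyt.prodMk_nhds hvφ)
    have hymin : ∀ z : Fin k → ℝ, (1 - t0) * escore S y F + t0 * escore S y G ≤
        (1 - t0) * escore S z F + t0 * escore S z G := by
      intro z
      have hzlim : Filter.Tendsto (fun n =>
          (1 - v (ns (φ n))) * escore S z F + (v (ns (φ n))) * escore S z G)
          Filter.atTop (nhds ((1 - t0) * escore S z F + t0 * escore S z G)) :=
        (hVcont.tendsto (z, t0)).comp (tendsto_const_nhds.prodMk_nhds hvφ)
      refine le_of_tendsto_of_tendsto' hVlim hzlim ?_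
      intro n
      have h := hcons (mix F G (v (ns (φ n)))) (hsub (hmixmem _ (hv _))) z trivial
      rwa [hEform _ _ (hv _), hEform _ _ (hv _)] at h
    have h1 : escore S y (mix F G t0) = escore S (T (mix F G t0)) (mix F G t0) := by
      have hx0_le := hcons (mix F G t0) (hsub (hmixmem t0 ht0)) y trivial
      have hy_le := hymin (T (mix F G t0))
      rw [hEform y t0 ht0]
      rw [hEform y t0 ht0, hEform (T (mix F G t0)) t0 ht0] at hx0_le
      rw [hEform (T (mix F G t0)) t0 ht0]
      linarith
    have hyx0 : y = T (mix F G t0) := huniq (mix F G t0) (hsub (hmixmem t0 ht0)) y trivial h1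
    exact hyx0 ▸ hyt
  intro t0 ht0
  rw [ContinuousWithinAt, Filter.tendsto_iff_seq_tendsto]
  intro u hu
  have hu1 : Filter.Tendsto u Filter.atTop (nhds t0) := hu.mono_right nhdsWithin_le_nhds
  have hu2 : ∀ᶠ n in Filter.atTop, u n ∈ Set.Icc (0:ℝ) 1 := hu self_mem_nhdsWithin
  set v : ℕ → ℝ := fun n => max 0 (min 1 (u n)) with hvdef
  have hv : ∀ n, v n ∈ Set.Icc (0:ℝ) 1 := fun n =>
    ⟨le_max_left _ _, max_le (by norm_num) (min_le_left _ _)⟩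
  have hproj : Continuous fun t : ℝ => max 0 (min 1 t) :=
    continuous_const.max (continuous_const.min continuous_id)
  have hvt : Filter.Tendsto v Filter.atTop (nhds t0) := by
    have h := (hproj.tendsto t0).comp hu1
    simpa [min_eq_right ht0.2, max_eq_right ht0.1, Function.comp_def] using h
  refine (key v hv t0 ht0 hvt).congr' ?_
  filter_upwards [hu2] with n hn
  simp [hvdef, min_eq_right hn.2, max_eq_right hn.1]
end

section
/- Let F be a convex class of probability measures on Ω and let T : F → A ⊆ ℝ^k be identifiable with a strict F-identification function V : A × Ω → ℝ^k. Then for any F, G ∈ F, the path γ : [0,1] → A defined by γ(λ) = T(λF + (1−λ)G) is either constant or injective. -/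
open MeasureTheory ENNReal

/-- If `𝓕` is convex and `T` is identifiable with a strict
`𝓕`-identification function `V`, then for any `F, G ∈ 𝓕` the path
`γ(lam) = T (lam • F + (1 - lam) • G)` is either constant or injective on `[0,1]`. -/
theorem statement1 {Ω : Type*} [MeasurableSpace Ω] {k : ℕ}
    (𝓕 : Set (Measure Ω)) (hprob : ∀ F ∈ 𝓕, IsProbabilityMeasure F)
    (hconv : MixConvex 𝓕)
    (A : Set (Fin k → ℝ)) (T : Measure Ω → (Fin k → ℝ))
    (hTA : ∀ F ∈ 𝓕, T F ∈ A)
    (V : (Fin k → ℝ) → Ω → (Fin k → ℝ))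
    (hVint : ∀ x ∈ A, ∀ F ∈ 𝓕, Integrable (V x) F)
    (hVzero : ∀ F ∈ 𝓕, ∫ y, V (T F) y ∂F = 0)
    (hVstrict : ∀ F ∈ 𝓕, ∀ x ∈ A, (∫ y, V x y ∂F) = 0 → x = T F)
    (F G : Measure Ω) (hF : F ∈ 𝓕) (hG : G ∈ 𝓕) :
    (∀ lam ∈ Set.Icc (0:ℝ) 1, ∀ lam' ∈ Set.Icc (0:ℝ) 1,
        T (mix G F lam) = T (mix G F lam')) ∨
      Set.InjOn (fun lam => T (mix G F lam)) (Set.Icc (0:ℝ) 1) := by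

  classical
  -- integral over a mixture
  have hint : ∀ x ∈ A, ∀ lam ∈ Set.Icc (0:ℝ) 1,
      ∫ y, V x y ∂(mix G F lam) = (1 - lam) • (∫ y, V x y ∂G) + lam • (∫ y, V x y ∂F) := by
    intro x hx lam hlam
    obtain ⟨h0, h1⟩ := hlam
    have hG' : Integrable (V x) G := hVint x hx G hG
    have hF' : Integrable (V x) F := hVint x hx F hF
    have hGs : Integrable (V x) (ENNReal.ofReal (1 - lam) • G) :=
      hG'.smul_measure ENNReal.ofReal_ne_top
    have hFs : Integrable (V x) (ENNReal.ofReal lam • F) :=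
      hF'.smul_measure ENNReal.ofReal_ne_top
    rw [mix, integral_add_measure hGs hFs, integral_smul_measure, integral_smul_measure,
      ENNReal.toReal_ofReal (by linarith), ENNReal.toReal_ofReal h0]
  by_cases hinj : Set.InjOn (fun lam => T (mix G F lam)) (Set.Icc (0:ℝ) 1)
  · exact Or.inr hinj
  left
  rw [Set.InjOn] at hinj
  push_neg at hinj
  obtain ⟨l1, hl1, l2, hl2, heq, hne⟩ := hinj
  set x := T (mix G F l1) with hxdef
  have hmix1 : mix G F l1 ∈ 𝓕 := hconv G hG F hF l1 hl1
  have hmix2 : mix G F l2 ∈ 𝓕 := hconv G hG F hF l2 hl2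
  have hxA : x ∈ A := hTA _ hmix1
  set a := ∫ y, V x y ∂G with hadef
  set b := ∫ y, V x y ∂F with hbdef
  have eq1 : (1 - l1) • a + l1 • b = 0 := by
    rw [← hint x hxA l1 hl1]; exact hVzero _ hmix1
  have eq2 : (1 - l2) • a + l2 • b = 0 := by
    rw [← hint x hxA l2 hl2, heq]; exact hVzero _ hmix2
  have hab : (l2 - l1) • (a - b) = 0 := by
    have h := sub_eq_zero_of_eq (eq1.trans eq2.symm)
    calc (l2 - l1) • (a - b)
        = ((1 - l1) • a + l1 • b) - ((1 - l2) • a + l2 • b) := by module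
      _ = 0 := h
  have hab' : a = b := by
    rcases smul_eq_zero.mp hab with h | h
    · exact absurd (by linarith [sub_eq_zero.mp (by linarith : l2 - l1 = 0)]) hne
    · exact sub_eq_zero.mp h
  have ha : a = 0 := by
    have : ((1 - l1) + l1) • a = 0 := by rw [add_smul]; rw [← hab'] at eq1; exact eq1
    simpa using this
  have hb : b = 0 := hab' ▸ ha
  have hconst : ∀ lam ∈ Set.Icc (0:ℝ) 1, T (mix G F lam) = x := by
    intro lam hlam
    have hz : ∫ y, V x y ∂(mix G F lam) = 0 := by
      rw [hint x hxA lam hlam, ← hadef, ← hbdef, ha, hb, smul_zero, smul_zero, add_zero]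
    exact (hVstrict _ (hconv G hG F hF lam hlam) x hxA hz).symm
  intro lam hlam lam' hlam'
  rw [hconst lam hlam, hconst lam' hlam']
end

section
/- Let F be a convex class of probability measures on Ω and let T : F → A ⊆ ℝ^k be mixture-continuous and surjective onto A. Let S : A × Ω → ℝ be strictly F-consistent for T. Then for each F ∈ F with t = T(F) and each x ∈ A with x ≠ t, there is a continuous path γ : [0,1] → A with γ(0) = x, γ(1) = t such that the function λ ↦ S̄(γ(λ),F) is decreasing on [0,1]; moreover, for 0 ≤ λ < λ′ ≤ 1 with γ(λ) ≠ γ(λ′) it holds that S̄(γ(λ),F) > S̄(γ(λ′),F). -/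
open MeasureTheory ENNReal

/-- For a strictly `𝓕`-consistent scoring function `S` of a
mixture-continuous surjective functional `T`, for every `F ∈ 𝓕` and `x ∈ A`, `x ≠ T F`,
there is a continuous path from `x` to `T F` along which the expected score decreases,
strictly so between points where the path takes different values. -/
theorem statement2 {Ω : Type*} [MeasurableSpace Ω] {k : ℕ}
    (𝓕 : Set (Measure Ω)) (hprob : ∀ F ∈ 𝓕, IsProbabilityMeasure F)
    (hconv : MixConvex 𝓕)
    (A : Set (Fin k → ℝ)) (T : Measure Ω → (Fin k → ℝ))
    (hTA : ∀ F ∈ 𝓕, T F ∈ A)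
    (hmix : MixContinuous 𝓕 T)
    (hsurj : ∀ x ∈ A, ∃ F ∈ 𝓕, T F = x)
    (S : (Fin k → ℝ) → Ω → ℝ)
    (hSint : ∀ x ∈ A, ∀ F ∈ 𝓕, Integrable (S x) F)
    (hS : StrictlyConsistent 𝓕 A T S)
    (F : Measure Ω) (hF : F ∈ 𝓕)
    (x : Fin k → ℝ) (hx : x ∈ A) (hxne : x ≠ T F) :
    ∃ γ : ℝ → (Fin k → ℝ),
      ContinuousOn γ (Set.Icc (0:ℝ) 1) ∧
      (∀ lam ∈ Set.Icc (0:ℝ) 1, γ lam ∈ A) ∧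
      γ 0 = x ∧ γ 1 = T F ∧
      AntitoneOn (fun lam => escore S (γ lam) F) (Set.Icc (0:ℝ) 1) ∧
      (∀ lam ∈ Set.Icc (0:ℝ) 1, ∀ lam' ∈ Set.Icc (0:ℝ) 1,
        lam < lam' → γ lam ≠ γ lam' →
          escore S (γ lam') F < escore S (γ lam) F) := by
  obtain ⟨G, hG, hTG⟩ := hsurj x hx
  have hmem : ∀ μ ∈ Set.Icc (0:ℝ) 1, mix F G μ ∈ 𝓕 := fun μ hμ => hconv F hF G hG μ hμ
  have hmixscore : ∀ a ∈ A, ∀ μ ∈ Set.Icc (0:ℝ) 1,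
      escore S a (mix F G μ) = (1-μ) * escore S a F + μ * escore S a G := by
    intro a ha μ hμ
    have h1 : Integrable (S a) F := hSint a ha F hF
    have h2 : Integrable (S a) G := hSint a ha G hG
    simp only [escore, mix]
    rw [integral_add_measure (h1.smul_measure ofReal_ne_top) (h2.smul_measure ofReal_ne_top),
      integral_smul_measure, integral_smul_measure,
      ENNReal.toReal_ofReal (by linarith [hμ.2] : (0:ℝ) ≤ 1 - μ),
      ENNReal.toReal_ofReal hμ.1, smul_eq_mul, smul_eq_mul]
  have key : ∀ μ ∈ Set.Icc (0:ℝ) 1, ∀ μ' ∈ Set.Icc (0:ℝ) 1, μ ≤ μ' →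
      escore S (T (mix F G μ)) F ≤ escore S (T (mix F G μ')) F ∧
      (T (mix F G μ) ≠ T (mix F G μ') →
        escore S (T (mix F G μ)) F < escore S (T (mix F G μ')) F) := by
    intro μ hμ μ' hμ' hle
    rcases eq_or_lt_of_le hle with rfl | hlt
    · exact ⟨le_rfl, fun h => absurd rfl h⟩
    set t := T (mix F G μ) with ht
    set t' := T (mix F G μ') with ht'
    have htA : t ∈ A := hTA _ (hmem μ hμ)
    have ht'A : t' ∈ A := hTA _ (hmem μ' hμ')
    have h1 : escore S t (mix F G μ) ≤ escore S t' (mix F G μ) :=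
      hS.1 _ (hmem μ hμ) t' ht'A
    have h2 : escore S t' (mix F G μ') ≤ escore S t (mix F G μ') :=
      hS.1 _ (hmem μ' hμ') t htA
    rw [hmixscore t htA μ hμ, hmixscore t' ht'A μ hμ] at h1
    rw [hmixscore t htA μ' hμ', hmixscore t' ht'A μ' hμ'] at h2
    constructor
    · nlinarith [hμ.1, hμ'.2, mul_nonneg hμ.1 (sub_nonneg.2 hle)]
    · intro hne
      have h1' : escore S t (mix F G μ) < escore S t' (mix F G μ) :=
        lt_of_le_of_ne (hS.1 _ (hmem μ hμ) t' ht'A)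
          (fun h => hne.symm (hS.2 _ (hmem μ hμ) t' ht'A h.symm))
      have h2' : escore S t' (mix F G μ') < escore S t (mix F G μ') :=
        lt_of_le_of_ne (hS.1 _ (hmem μ' hμ') t htA)
          (fun h => hne (hS.2 _ (hmem μ' hμ') t htA h.symm))
      rw [hmixscore t htA μ hμ, hmixscore t' ht'A μ hμ] at h1'
      rw [hmixscore t htA μ' hμ', hmixscore t' ht'A μ' hμ'] at h2'
      nlinarith [hμ.1, hμ'.2]
  have hmix1 : mix F G 1 = G := by simp [mix]
  have hmix0 : mix F G 0 = F := by simp [mix]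
  refine ⟨fun lam => T (mix F G (1 - lam)), ?_, ?_, ?_, ?_, ?_, ?_⟩
  · exact (hmix F hF G hG).comp
      ((continuous_const.sub continuous_id).continuousOn)
      (fun lam hlam => ⟨by linarith [hlam.2], by linarith [hlam.1]⟩)
  · intro lam hlam
    exact hTA _ (hmem _ ⟨by linarith [hlam.2], by linarith [hlam.1]⟩)
  · show T (mix F G (1 - 0)) = x
    rw [sub_zero, hmix1, hTG]
  · show T (mix F G (1 - 1)) = T F
    rw [sub_self, hmix0]
  · intro lam hlam lam' hlam' hle
    exact (key (1 - lam') ⟨by linarith [hlam'.2], by linarith [hlam'.1]⟩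
      (1 - lam) ⟨by linarith [hlam.2], by linarith [hlam.1]⟩ (by linarith)).1
  · intro lam hlam lam' hlam' hlt hne
    exact (key (1 - lam') ⟨by linarith [hlam'.2], by linarith [hlam'.1]⟩
      (1 - lam) ⟨by linarith [hlam.2], by linarith [hlam.1]⟩ (by linarith)).2
      (fun h => hne h.symm)
end

section
/- Let T : F → A ⊆ ℝ^k be a functional and S : A × Ω → ℝ a scoring function. Then: (i) for p ∈ [1,∞), if S is (strictly) metrically F-order-sensitive for T relative to the ℓ^p-norm, then S is (strictly) componentwise F-order-sensitive for T; (i′) if S is (strictly) metrically F-order-sensitive for T relative to the ℓ^∞-norm, then S is componentwise F-order-sensitive for T; (i″) if S is (strictly) metrically F-order-sensitive for T relative to the ℓ^∞-norm, then S is (strictly) F-consistent for T; (ii) if S is (strictly) componentwise F-order-sensitive for T, then S is (strictly) F-order-sensitive on line segments for T; (iii) if S is (strictly) F-order-sensitive on line segments for T, then S is (strictly) F-consistent for T. -/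
open MeasureTheory ENNReal

/-- The `ℓ^p`-norm on `ℝ^k`, for `p ∈ [1, ∞]` (given as an extended real). -/
noncomputable def lpNorm {k : ℕ} (p : ℝ≥0∞) (x : Fin k → ℝ) : ℝ :=
  if p = ⊤ then ⨆ i, |x i| else (∑ i, |x i| ^ p.toReal) ^ (1 / p.toReal)

/-- `S` is metrically `𝓕`-order-sensitive for `T` relative to the norm `nrm`. -/
def MetricallyOS {α Ω : Type*} [MeasurableSpace Ω] [Sub α]
    (𝓕 : Set (Measure Ω)) (A : Set α) (T : Measure Ω → α)
    (S : α → Ω → ℝ) (nrm : α → ℝ) : Prop :=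
  ∀ F ∈ 𝓕, ∀ x ∈ A, ∀ z ∈ A,
    nrm (x - T F) ≤ nrm (z - T F) → escore S x F ≤ escore S z F

/-- `S` is strictly metrically `𝓕`-order-sensitive for `T` relative to the norm `nrm`. -/
def StrictlyMetricallyOS {α Ω : Type*} [MeasurableSpace Ω] [Sub α]
    (𝓕 : Set (Measure Ω)) (A : Set α) (T : Measure Ω → α)
    (S : α → Ω → ℝ) (nrm : α → ℝ) : Prop :=
  MetricallyOS 𝓕 A T S nrm ∧
    ∀ F ∈ 𝓕, ∀ x ∈ A, ∀ z ∈ A,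
      nrm (x - T F) < nrm (z - T F) → escore S x F < escore S z F

/-- `S` is componentwise `𝓕`-order-sensitive for `T`. -/
def ComponentwiseOS {Ω : Type*} [MeasurableSpace Ω] {k : ℕ}
    (𝓕 : Set (Measure Ω)) (A : Set (Fin k → ℝ)) (T : Measure Ω → (Fin k → ℝ))
    (S : (Fin k → ℝ) → Ω → ℝ) : Prop :=
  ∀ F ∈ 𝓕, ∀ x ∈ A, ∀ z ∈ A,
    (∀ m, (z m ≤ x m ∧ x m ≤ T F m) ∨ (T F m ≤ x m ∧ x m ≤ z m)) →
    escore S x F ≤ escore S z F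

/-- `S` is strictly componentwise `𝓕`-order-sensitive for `T`. -/
def StrictlyComponentwiseOS {Ω : Type*} [MeasurableSpace Ω] {k : ℕ}
    (𝓕 : Set (Measure Ω)) (A : Set (Fin k → ℝ)) (T : Measure Ω → (Fin k → ℝ))
    (S : (Fin k → ℝ) → Ω → ℝ) : Prop :=
  ComponentwiseOS 𝓕 A T S ∧
    ∀ F ∈ 𝓕, ∀ x ∈ A, ∀ z ∈ A,
      (∀ m, (z m ≤ x m ∧ x m ≤ T F m) ∨ (T F m ≤ x m ∧ x m ≤ z m)) →
      x ≠ z → escore S x F < escore S z F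

/-- `S` is `𝓕`-order-sensitive on line segments for `T`: for every unit vector `v`
(with respect to the Euclidean norm), `s ↦ S̄(T F + s • v, F)` is increasing on
`{s ∈ [0,∞) : T F + s • v ∈ A}`. -/
def LineSegmentOS {Ω : Type*} [MeasurableSpace Ω] {k : ℕ}
    (𝓕 : Set (Measure Ω)) (A : Set (Fin k → ℝ)) (T : Measure Ω → (Fin k → ℝ))
    (S : (Fin k → ℝ) → Ω → ℝ) : Prop :=
  ∀ F ∈ 𝓕, ∀ v : Fin k → ℝ, lpNorm 2 v = 1 →
    MonotoneOn (fun s => escore S (T F + s • v) F)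
      {s : ℝ | 0 ≤ s ∧ T F + s • v ∈ A}

/-- `S` is strictly `𝓕`-order-sensitive on line segments for `T`. -/
def StrictlyLineSegmentOS {Ω : Type*} [MeasurableSpace Ω] {k : ℕ}
    (𝓕 : Set (Measure Ω)) (A : Set (Fin k → ℝ)) (T : Measure Ω → (Fin k → ℝ))
    (S : (Fin k → ℝ) → Ω → ℝ) : Prop :=
  ∀ F ∈ 𝓕, ∀ v : Fin k → ℝ, lpNorm 2 v = 1 →
    StrictMonoOn (fun s => escore S (T F + s • v) F)
      {s : ℝ | 0 ≤ s ∧ T F + s • v ∈ A}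

lemma lpHelp_abs_le_of_between {z x t : ℝ}
    (h : (z ≤ x ∧ x ≤ t) ∨ (t ≤ x ∧ x ≤ z)) : |x - t| ≤ |z - t| := by
  rcases h with ⟨h1, h2⟩ | ⟨h1, h2⟩
  · rw [abs_of_nonpos (by linarith), abs_of_nonpos (by linarith)]; linarith
  · rw [abs_of_nonneg (by linarith), abs_of_nonneg (by linarith)]; linarith

lemma lpHelp_abs_lt_of_between {z x t : ℝ}
    (h : (z ≤ x ∧ x ≤ t) ∨ (t ≤ x ∧ x ≤ z)) (hne : x ≠ z) : |x - t| < |z - t| := by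
  rcases h with ⟨h1, h2⟩ | ⟨h1, h2⟩
  · have : z < x := lt_of_le_of_ne h1 (Ne.symm hne)
    rw [abs_of_nonpos (by linarith), abs_of_nonpos (by linarith)]; linarith
  · have : x < z := lt_of_le_of_ne h2 hne
    rw [abs_of_nonneg (by linarith), abs_of_nonneg (by linarith)]; linarith

lemma lpNorm_finite_mono {k : ℕ} {p : ℝ≥0∞} (hp1 : 1 ≤ p) (hpt : p ≠ ⊤)
    {a b : Fin k → ℝ} (h : ∀ i, |a i| ≤ |b i|) : lpNorm p a ≤ lpNorm p b := by
  have hpt1 : (1:ℝ) ≤ p.toReal := by simpa using ENNReal.toReal_mono hpt hp1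
  have hpos : (0:ℝ) < p.toReal := lt_of_lt_of_le one_pos hpt1
  simp only [_root_.lpNorm, if_neg hpt]
  exact Real.rpow_le_rpow (Finset.sum_nonneg fun i _ => Real.rpow_nonneg (abs_nonneg _) _)
    (Finset.sum_le_sum fun i _ => Real.rpow_le_rpow (abs_nonneg _) (h i) hpos.le)
    (by positivity)

lemma lpNorm_finite_strict {k : ℕ} {p : ℝ≥0∞} (hp1 : 1 ≤ p) (hpt : p ≠ ⊤)
    {a b : Fin k → ℝ} (h : ∀ i, |a i| ≤ |b i|) (j : Fin k) (hj : |a j| < |b j|) :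
    lpNorm p a < lpNorm p b := by
  have hpt1 : (1:ℝ) ≤ p.toReal := by simpa using ENNReal.toReal_mono hpt hp1
  have hpos : (0:ℝ) < p.toReal := lt_of_lt_of_le one_pos hpt1
  simp only [_root_.lpNorm, if_neg hpt]
  refine Real.rpow_lt_rpow (Finset.sum_nonneg fun i _ => Real.rpow_nonneg (abs_nonneg _) _)
    ?_ (by positivity)
  exact Finset.sum_lt_sum (fun i _ => Real.rpow_le_rpow (abs_nonneg _) (h i) hpos.le)
    ⟨j, Finset.mem_univ j, Real.rpow_lt_rpow (abs_nonneg _) hj hpos⟩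

lemma lpNorm_top_mono {k : ℕ} {a b : Fin k → ℝ} (h : ∀ i, |a i| ≤ |b i|) :
    lpNorm ⊤ a ≤ lpNorm ⊤ b := by
  simp only [_root_.lpNorm, if_pos rfl, eq_self_iff_true, if_true]
  rcases isEmpty_or_nonempty (Fin k) with hk | hk
  · simp [Real.iSup_of_isEmpty]
  · exact ciSup_le fun i => (h i).trans (le_ciSup (f := fun i => |b i|) (Set.Finite.bddAbove (Set.finite_range _)) i)

lemma lpNorm_top_zero {k : ℕ} : lpNorm ⊤ (0 : Fin k → ℝ) = 0 := by
  simp only [_root_.lpNorm, if_pos rfl, eq_self_iff_true, if_true, Pi.zero_apply, abs_zero]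
  rcases isEmpty_or_nonempty (Fin k) with hk | hk
  · simp [Real.iSup_of_isEmpty]
  · simp [ciSup_const]

lemma lpNorm_top_pos {k : ℕ} {a : Fin k → ℝ} (ha : a ≠ 0) : 0 < lpNorm ⊤ a := by
  obtain ⟨j, hj⟩ : ∃ j, a j ≠ 0 := by
    by_contra hc; push_neg at hc; exact ha (funext hc)
  have hle : |a j| ≤ lpNorm ⊤ a := by
    simp only [_root_.lpNorm, if_pos rfl, eq_self_iff_true, if_true]
    exact le_ciSup (f := fun i => |a i|) (Set.Finite.bddAbove (Set.finite_range _)) j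
  exact lt_of_lt_of_le (abs_pos.mpr hj) hle

lemma lpNorm_two_pos {k : ℕ} {a : Fin k → ℝ} (ha : a ≠ 0) : 0 < lpNorm 2 a := by
  obtain ⟨j, hj⟩ : ∃ j, a j ≠ 0 := by
    by_contra hc; push_neg at hc; exact ha (funext hc)
  simp only [_root_.lpNorm, if_neg (by norm_num : (2:ENNReal) ≠ ⊤)]
  apply Real.rpow_pos_of_pos
  exact Finset.sum_pos' (fun i _ => Real.rpow_nonneg (abs_nonneg _) _)
    ⟨j, Finset.mem_univ j, Real.rpow_pos_of_pos (abs_pos.mpr hj) _⟩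

lemma lpNorm_two_smul {k : ℕ} {c : ℝ} (hc : 0 ≤ c) (a : Fin k → ℝ) :
    lpNorm 2 (c • a) = c * lpNorm 2 a := by
  have h2 : ((2:ENNReal)).toReal = 2 := by norm_num
  simp only [_root_.lpNorm, if_neg (by norm_num : (2:ENNReal) ≠ ⊤), Pi.smul_apply, smul_eq_mul, h2]
  have key : ∀ i : Fin k, |c * a i| ^ (2:ℝ) = c ^ (2:ℝ) * |a i| ^ (2:ℝ) := fun i => by
    rw [abs_mul, abs_of_nonneg hc, Real.mul_rpow hc (abs_nonneg _)]
  rw [Finset.sum_congr rfl fun i _ => key i, ← Finset.mul_sum,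
    Real.mul_rpow (Real.rpow_nonneg hc _)
      (Finset.sum_nonneg fun i _ => Real.rpow_nonneg (abs_nonneg _) _),
    ← Real.rpow_mul hc]
  norm_num
/-- Logical implications between the notions of order-sensitivity:
(i) metrical (ℓ^p, p ∈ [1,∞)) ⇒ componentwise (also for the strict versions);
(i′) metrical (ℓ^∞) ⇒ componentwise (strict metrical only gives the non-strict version);
(i″) metrical (ℓ^∞) ⇒ consistency (also for the strict versions);
(ii) componentwise ⇒ on line segments (also strict);
(iii) on line segments ⇒ consistency (also strict). -/
theorem statement6 {Ω : Type*} [MeasurableSpace Ω] {k : ℕ}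
    (𝓕 : Set (Measure Ω)) (hprob : ∀ F ∈ 𝓕, IsProbabilityMeasure F)
    (A : Set (Fin k → ℝ)) (T : Measure Ω → (Fin k → ℝ))
    (hTA : ∀ F ∈ 𝓕, T F ∈ A)
    (S : (Fin k → ℝ) → Ω → ℝ)
    (hSint : ∀ x ∈ A, ∀ F ∈ 𝓕, Integrable (S x) F) :
    -- (i)
    (∀ p : ℝ≥0∞, 1 ≤ p → p ≠ ⊤ →
      (MetricallyOS 𝓕 A T S (lpNorm p) → ComponentwiseOS 𝓕 A T S) ∧
      (StrictlyMetricallyOS 𝓕 A T S (lpNorm p) → StrictlyComponentwiseOS 𝓕 A T S)) ∧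
    -- (i′)
    ((MetricallyOS 𝓕 A T S (lpNorm ⊤) → ComponentwiseOS 𝓕 A T S) ∧
      (StrictlyMetricallyOS 𝓕 A T S (lpNorm ⊤) → ComponentwiseOS 𝓕 A T S)) ∧
    -- (i″)
    ((MetricallyOS 𝓕 A T S (lpNorm ⊤) → Consistent 𝓕 A T S) ∧
      (StrictlyMetricallyOS 𝓕 A T S (lpNorm ⊤) → StrictlyConsistent 𝓕 A T S)) ∧
    -- (ii)
    ((ComponentwiseOS 𝓕 A T S → LineSegmentOS 𝓕 A T S) ∧
      (StrictlyComponentwiseOS 𝓕 A T S → StrictlyLineSegmentOS 𝓕 A T S)) ∧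
    -- (iii)
    ((LineSegmentOS 𝓕 A T S → Consistent 𝓕 A T S) ∧
      (StrictlyLineSegmentOS 𝓕 A T S → StrictlyConsistent 𝓕 A T S)) := by
  -- helper blocks
  have hbet : ∀ (F : Measure Ω) (x z : Fin k → ℝ),
      (∀ m, (z m ≤ x m ∧ x m ≤ T F m) ∨ (T F m ≤ x m ∧ x m ≤ z m)) →
      ∀ i, |(x - T F) i| ≤ |(z - T F) i| := by
    intro F x z hcomp i
    simpa using lpHelp_abs_le_of_between (hcomp i)
  have hitop : MetricallyOS 𝓕 A T S (lpNorm ⊤) → Consistent 𝓕 A T S := by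
    intro hM F hF x hx
    apply hM F hF (T F) (hTA F hF) x hx
    rw [sub_self, lpNorm_top_zero]
    by_cases hxt : x = T F
    · rw [hxt, sub_self, lpNorm_top_zero]
    · exact (lpNorm_top_pos (sub_ne_zero.mpr hxt)).le
  have hiii : LineSegmentOS 𝓕 A T S → Consistent 𝓕 A T S := by
    intro hL F hF x hx
    by_cases hxt : x = T F
    · rw [hxt]
    · have hdne : x - T F ≠ 0 := sub_ne_zero.mpr hxt
      set s := lpNorm 2 (x - T F) with hs
      have hspos : 0 < s := lpNorm_two_pos hdne
      set v := s⁻¹ • (x - T F) with hv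
      have hnv : lpNorm 2 v = 1 := by
        rw [hv, lpNorm_two_smul (inv_nonneg.mpr hspos.le), ← hs, inv_mul_cancel₀ hspos.ne']
      have hxv : T F + s • v = x := by
        rw [hv, smul_smul, mul_inv_cancel₀ hspos.ne', one_smul]; abel
      have h0mem : (0:ℝ) ∈ {r : ℝ | 0 ≤ r ∧ T F + r • v ∈ A} :=
        ⟨le_rfl, by simpa using hTA F hF⟩
      have hsmem : s ∈ {r : ℝ | 0 ≤ r ∧ T F + r • v ∈ A} :=
        ⟨hspos.le, by rw [hxv]; exact hx⟩
      have := hL F hF v hnv h0mem hsmem hspos.le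
      simpa [hxv] using this
  refine ⟨?_, ?_, ?_, ?_, ?_⟩
  · -- (i)
    intro p hp1 hpt
    constructor
    · intro hM F hF x hx z hz hcomp
      exact hM F hF x hx z hz (lpNorm_finite_mono hp1 hpt (hbet F x z hcomp))
    · intro hM
      refine ⟨fun F hF x hx z hz hcomp =>
        hM.1 F hF x hx z hz (lpNorm_finite_mono hp1 hpt (hbet F x z hcomp)), ?_⟩
      intro F hF x hx z hz hcomp hne
      obtain ⟨j, hj⟩ : ∃ j, x j ≠ z j := by
        by_contra hc; push_neg at hc; exact hne (funext hc)
      exact hM.2 F hF x hx z hz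
        (lpNorm_finite_strict hp1 hpt (hbet F x z hcomp) j
          (by simpa using lpHelp_abs_lt_of_between (hcomp j) hj))
  · -- (i′)
    constructor
    · intro hM F hF x hx z hz hcomp
      exact hM F hF x hx z hz (lpNorm_top_mono (hbet F x z hcomp))
    · intro hM F hF x hx z hz hcomp
      exact hM.1 F hF x hx z hz (lpNorm_top_mono (hbet F x z hcomp))
  · -- (i″)
    refine ⟨hitop, ?_⟩
    intro hM
    refine ⟨hitop hM.1, ?_⟩
    intro F hF x hx hEq
    by_contra hne
    have h1 : lpNorm ⊤ (T F - T F) < lpNorm ⊤ (x - T F) := by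
      rw [sub_self, lpNorm_top_zero]
      exact lpNorm_top_pos (sub_ne_zero.mpr hne)
    have := hM.2 F hF (T F) (hTA F hF) x hx h1
    linarith
  · -- (ii)
    have hcond : ∀ (F : Measure Ω) (v : Fin k → ℝ) (s1 s2 : ℝ), 0 ≤ s1 → s1 ≤ s2 →
        ∀ m, ((T F + s2 • v) m ≤ (T F + s1 • v) m ∧ (T F + s1 • v) m ≤ T F m) ∨
          (T F m ≤ (T F + s1 • v) m ∧ (T F + s1 • v) m ≤ (T F + s2 • v) m) := by
      intro F v s1 s2 hs1 h12 m
      simp only [Pi.add_apply, Pi.smul_apply, smul_eq_mul]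
      rcases le_total (v m) 0 with hvm | hvm
      · left
        constructor
        · nlinarith [mul_le_mul_of_nonpos_right h12 hvm]
        · nlinarith [mul_nonpos_of_nonneg_of_nonpos hs1 hvm]
      · right
        constructor
        · nlinarith [mul_nonneg hs1 hvm]
        · nlinarith [mul_le_mul_of_nonneg_right h12 hvm]
    constructor
    · intro hC F hF v hv s1 hs1 s2 hs2 h12
      exact hC F hF _ hs1.2 _ hs2.2 (hcond F v s1 s2 hs1.1 h12)
    · intro hC F hF v hv s1 hs1 s2 hs2 h12
      have hvne : v ≠ 0 := by
        intro h0
        rw [h0] at hv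
        have hz : lpNorm 2 (0 : Fin k → ℝ) = 0 := by
          simpa using lpNorm_two_smul (le_refl (0:ℝ)) (0 : Fin k → ℝ)
        rw [hz] at hv; norm_num at hv
      have hne : T F + s1 • v ≠ T F + s2 • v := by
        intro heq
        have h1 : s1 • v = s2 • v := add_left_cancel heq
        have h2 : (s1 - s2) • v = 0 := by rw [sub_smul, h1, sub_self]
        rcases smul_eq_zero.mp h2 with h | h
        · exact absurd h (sub_ne_zero.mpr h12.ne)
        · exact hvne h
      exact hC.2 F hF _ hs1.2 _ hs2.2 (hcond F v s1 s2 hs1.1 h12.le) hne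
  · -- (iii)
    refine ⟨hiii, ?_⟩
    intro hL
    refine ⟨hiii (fun F hF v hv => (hL F hF v hv).monotoneOn), ?_⟩
    intro F hF x hx hEq
    by_contra hxt
    have hdne : x - T F ≠ 0 := sub_ne_zero.mpr hxt
    set s := lpNorm 2 (x - T F) with hs
    have hspos : 0 < s := lpNorm_two_pos hdne
    set v := s⁻¹ • (x - T F) with hv
    have hnv : lpNorm 2 v = 1 := by
      rw [hv, lpNorm_two_smul (inv_nonneg.mpr hspos.le), ← hs, inv_mul_cancel₀ hspos.ne']
    have hxv : T F + s • v = x := by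
      rw [hv, smul_smul, mul_inv_cancel₀ hspos.ne', one_smul]; abel
    have h0mem : (0:ℝ) ∈ {r : ℝ | 0 ≤ r ∧ T F + r • v ∈ A} :=
      ⟨le_rfl, by simpa using hTA F hF⟩
    have hsmem : s ∈ {r : ℝ | 0 ≤ r ∧ T F + r • v ∈ A} :=
      ⟨hspos.le, by rw [hxv]; exact hx⟩
    have hlt := hL F hF v hnv h0mem hsmem hspos
    simp only [zero_smul, add_zero, hxv] at hlt
    linarith
end

section
/- Let T = (T₁, …, T_k) : F → A ⊆ ℝ^k be a k-dimensional functional with components T_m : F → A_m ⊆ ℝ, where A = A₁ × ⋯ × A_k. If there is a strictly componentwise F-order-sensitive scoring function S : A × Ω → ℝ for T, then each component T_m, m ∈ {1, …, k}, is elicitable; more precisely, for every z ∈ A the scoring function S_{m,z}(x_m, y) := S(z₁, …, z_{m−1}, x_m, z_{m+1}, …, z_k, y) is strictly F-consistent for T_m. -/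
open MeasureTheory ENNReal

/-- If `S` is strictly componentwise `𝓕`-order-sensitive for
`T : 𝓕 → A₁ × ⋯ × A_k`, then each component `T_m` is elicitable: for every `z ∈ A`
the scoring function `(x_m, y) ↦ S(z₁, …, z_{m-1}, x_m, z_{m+1}, …, z_k, y)` is
strictly `𝓕`-consistent for `T_m`. -/
theorem statement7 {Ω : Type*} [MeasurableSpace Ω] {k : ℕ}
    (𝓕 : Set (Measure Ω)) (hprob : ∀ F ∈ 𝓕, IsProbabilityMeasure F)
    (Am : Fin k → Set ℝ)
    (T : Measure Ω → (Fin k → ℝ))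
    (hTA : ∀ F ∈ 𝓕, ∀ m, T F m ∈ Am m)
    (S : (Fin k → ℝ) → Ω → ℝ)
    (hSint : ∀ x ∈ Set.univ.pi Am, ∀ F ∈ 𝓕, Integrable (S x) F)
    (hS : StrictlyComponentwiseOS 𝓕 (Set.univ.pi Am) T S) :
    ∀ m : Fin k, ∀ z ∈ Set.univ.pi Am,
      StrictlyConsistent 𝓕 (Am m) (fun F => T F m)
        (fun xm y => S (Function.update z m xm) y) := by
  intro m z hz
  have hmem : ∀ a, a ∈ Am m → Function.update z m a ∈ Set.univ.pi Am := by
    intro a ha j _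
    rcases eq_or_ne j m with rfl | h
    · simpa using ha
    · simpa [Function.update_of_ne h] using hz j trivial
  have hcond : ∀ F xm, (∀ j : Fin k,
      (Function.update z m xm j ≤ Function.update z m (T F m) j ∧
        Function.update z m (T F m) j ≤ T F j) ∨
      (T F j ≤ Function.update z m (T F m) j ∧
        Function.update z m (T F m) j ≤ Function.update z m xm j)) := by
    intro F xm j
    rcases eq_or_ne j m with rfl | h
    · rcases le_total xm (T F j) with h1 | h1
      · exact Or.inl ⟨by simpa using h1, by simp⟩
      · exact Or.inr ⟨by simp, by simpa using h1⟩
    · rcases le_total (z j) (T F j) with h1 | h1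
      · exact Or.inl ⟨le_of_eq (by simp [Function.update_of_ne h]), by simpa [Function.update_of_ne h] using h1⟩
      · exact Or.inr ⟨by simpa [Function.update_of_ne h] using h1, le_of_eq (by simp [Function.update_of_ne h])⟩
  constructor
  · intro F hF xm hxm
    exact hS.1 F hF (Function.update z m (T F m)) (hmem _ (hTA F hF m))
      (Function.update z m xm) (hmem _ hxm) (hcond F xm)
  · intro F hF xm hxm heq
    by_contra hne
    have hne' : Function.update z m (T F m) ≠ Function.update z m xm := by
      intro hcontra
      have := congrFun hcontra m
      simp at this
      exact hne (this.symm)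
    have := hS.2 F hF (Function.update z m (T F m)) (hmem _ (hTA F hF m))
      (Function.update z m xm) (hmem _ hxm) (hcond F xm) hne'
    have heq' : escore S (Function.update z m xm) F
        = escore S (Function.update z m (T F m)) F := heq
    linarith [heq', this]
end

section
/- Let S : A × Ω → ℝ be strictly metrically F-order-sensitive relative to an ℓ^p-norm for a surjective functional T = (T₁, …, T_k) : F → A ⊆ ℝ^k, with int(A) ≠ ∅, of the additively separable form S(x₁, …, x_k, y) = Σ_{m=1}^k S_m(x_m, y) with each S_m strictly F-consistent for T_m. Let λ₁, …, λ_k > 0 and define S*(x₁, …, x_k, y) = Σ_{m=1}^k λ_m S_m(x_m, y). Then S* is strictly metrically F-order-sensitive for T with respect to the same ℓ^p-norm if and only if λ₁ = λ₂ = ⋯ = λ_k. -/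
open MeasureTheory ENNReal

lemma lpNorm_single_aux {k : ℕ} (p : ℝ≥0∞) (hp : 1 ≤ p) (i : Fin k) {ε : ℝ} (hε : 0 ≤ ε) :
    lpNorm p (Pi.single i ε) = ε := by
  unfold _root_.lpNorm
  split_ifs with h
  · have : Nonempty (Fin k) := ⟨i⟩
    apply le_antisymm
    · apply ciSup_le
      intro m
      by_cases hm : m = i
      · subst hm; simp [abs_of_nonneg hε]
      · simp [Pi.single_eq_of_ne hm, hε]
    · have : Nonempty (Fin k) := ⟨i⟩
      have hb : BddAbove (Set.range fun m => |Pi.single i ε m|) :=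
        Set.Finite.bddAbove (Set.finite_range _)
      have := le_ciSup hb i
      simpa [abs_of_nonneg hε] using this
  · have hp0 : p ≠ 0 := by
      intro h0; rw [h0] at hp; exact absurd hp (by simp)
    have hpr : 0 < p.toReal := ENNReal.toReal_pos hp0 h
    have hsum : ∑ m, |Pi.single i ε m| ^ p.toReal = |ε| ^ p.toReal := by
      rw [Finset.sum_eq_single i]
      · simp
      · intro b _ hb
        rw [Pi.single_eq_of_ne hb, abs_zero, Real.zero_rpow hpr.ne']
      · intro hi; exact absurd (Finset.mem_univ i) hi
    rw [hsum, ← Real.rpow_mul (abs_nonneg ε), mul_one_div_cancel hpr.ne',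
      Real.rpow_one, abs_of_nonneg hε]

set_option maxHeartbeats 2000000 in
/-- In the setting of an additively separable scoring function
`S(x,y) = ∑ m, S_m(x_m,y)` that is strictly metrically `𝓕`-order-sensitive relative to an
`ℓ^p`-norm for a surjective `T` with `int(A) ≠ ∅`, and positive weights `lam m > 0`, the
reweighted score `S*(x,y) = ∑ m, lam m * S_m(x_m,y)` is strictly metrically
`𝓕`-order-sensitive with respect to the same `ℓ^p`-norm iff all weights coincide. -/
theorem statement10 {Ω : Type*} [MeasurableSpace Ω] {k : ℕ}
    (𝓕 : Set (Measure Ω)) (hprob : ∀ F ∈ 𝓕, IsProbabilityMeasure F)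
    (A : Set (Fin k → ℝ)) (hAint : (interior A).Nonempty)
    (T : Measure Ω → (Fin k → ℝ))
    (hTA : ∀ F ∈ 𝓕, T F ∈ A)
    (hsurj : ∀ x ∈ A, ∃ F ∈ 𝓕, T F = x)
    (p : ℝ≥0∞) (hp : 1 ≤ p)
    (S : (Fin k → ℝ) → Ω → ℝ)
    (Sm : Fin k → ℝ → Ω → ℝ)
    (hform : ∀ x ∈ A, ∀ y : Ω, S x y = ∑ m, Sm m (x m) y)
    (hSmint : ∀ m : Fin k, ∀ xm ∈ {xm : ℝ | ∃ z ∈ A, z m = xm}, ∀ F ∈ 𝓕,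
      Integrable (Sm m xm) F)
    (hSmcons : ∀ m : Fin k,
      StrictlyConsistent 𝓕 {xm : ℝ | ∃ z ∈ A, z m = xm} (fun F => T F m) (Sm m))
    (hS : StrictlyMetricallyOS 𝓕 A T S (lpNorm p))
    (lam : Fin k → ℝ) (hlam : ∀ m, 0 < lam m) :
    StrictlyMetricallyOS 𝓕 A T (fun x y => ∑ m, lam m * Sm m (x m) y) (lpNorm p) ↔
      ∀ i j : Fin k, lam i = lam j := by
  constructor
  · -- forward direction
    intro hstar i j
    by_cases hij : i = j
    · rw [hij]
    -- pick an interior point and a small perturbation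
    obtain ⟨t, ht⟩ := hAint
    have htA : t ∈ A := interior_subset ht
    obtain ⟨ε, hε, hball⟩ := Metric.isOpen_iff.mp isOpen_interior t ht
    set δ : ℝ := ε / 2 with hδdef
    have hδ : 0 < δ := by positivity
    set x : Fin k → ℝ := t + Pi.single i δ with hxdef
    set z : Fin k → ℝ := t + Pi.single j δ with hzdef
    have hmem : ∀ (m : Fin k), t + Pi.single m δ ∈ A := by
      intro m
      apply interior_subset (hball ?_)
      rw [Metric.mem_ball, dist_eq_norm, add_sub_cancel_left]
      calc ‖(Pi.single m δ : Fin k → ℝ)‖ ≤ δ := by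
            refine (pi_norm_le_iff_of_nonneg hδ.le).mpr fun l => ?_
            by_cases hl : l = m
            · subst hl; simp [Real.norm_eq_abs, abs_of_nonneg hδ.le]
            · simp [Pi.single_eq_of_ne hl, hδ.le]
        _ < ε := by rw [hδdef]; linarith
    have hx : x ∈ A := hmem i
    have hz : z ∈ A := hmem j
    obtain ⟨F, hF, hTF⟩ := hsurj t htA
    -- the two perturbed points have the same norm distance to t
    have hnorm : lpNorm p (x - T F) = lpNorm p (z - T F) := by
      rw [hTF, hxdef, hzdef, add_sub_cancel_left, add_sub_cancel_left,
        lpNorm_single_aux p hp i hδ.le, lpNorm_single_aux p hp j hδ.le]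
    -- equal expected scores
    have heqstar : escore (fun x y => ∑ m, lam m * Sm m (x m) y) x F =
        escore (fun x y => ∑ m, lam m * Sm m (x m) y) z F :=
      le_antisymm (hstar.1 F hF x hx z hz hnorm.le) (hstar.1 F hF z hz x hx hnorm.ge)
    have heqS : escore S x F = escore S z F :=
      le_antisymm (hS.1 F hF x hx z hz hnorm.le) (hS.1 F hF z hz x hx hnorm.ge)
    -- expected component scores
    set I : Fin k → ℝ → ℝ := fun m u => ∫ y, Sm m u y ∂F with hIdef
    have hint : ∀ (w : Fin k → ℝ), w ∈ A → ∀ m : Fin k, Integrable (Sm m (w m)) F :=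
      fun w hw m => hSmint m (w m) ⟨w, hw, rfl⟩ F hF
    have hsum : ∀ (c : Fin k → ℝ) (w : Fin k → ℝ), w ∈ A →
        escore (fun x y => ∑ m, c m * Sm m (x m) y) w F = ∑ m, c m * I m (w m) := by
      intro c w hw
      unfold escore
      rw [MeasureTheory.integral_finset_sum _
        (fun m _ => ((hint w hw m).const_mul (c m)))]
      exact Finset.sum_congr rfl fun m _ => MeasureTheory.integral_const_mul _ _
    have hsumS : ∀ (w : Fin k → ℝ), w ∈ A → escore S w F = ∑ m, I m (w m) := by
      intro w hw
      unfold escore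
      simp only [hform w hw]
      rw [MeasureTheory.integral_finset_sum _ (fun m _ => hint w hw m)]
    -- key sum computation
    have key : ∀ (c : Fin k → ℝ),
        (∑ m, c m * I m (x m)) - (∑ m, c m * I m (z m)) =
          c i * (I i (t i + δ) - I i (t i)) - c j * (I j (t j + δ) - I j (t j)) := by
      intro c
      rw [← Finset.sum_sub_distrib]
      have hvan : ∀ m ∈ Finset.univ, m ∉ ({i, j} : Finset (Fin k)) →
          c m * I m (x m) - c m * I m (z m) = 0 := by
        intro m _ hm
        simp only [Finset.mem_insert, Finset.mem_singleton, not_or] at hm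
        have hxm : x m = z m := by
          simp [hxdef, hzdef, Pi.single_eq_of_ne hm.1, Pi.single_eq_of_ne hm.2]
        rw [hxm]; ring
      rw [← Finset.sum_subset (Finset.subset_univ ({i, j} : Finset (Fin k))) hvan,
        Finset.sum_pair hij]
      have e1 : x i = t i + δ := by simp [hxdef]
      have e2 : z i = t i := by simp [hzdef, Pi.single_eq_of_ne hij]
      have e3 : x j = t j := by simp [hxdef, Pi.single_eq_of_ne (Ne.symm hij)]
      have e4 : z j = t j + δ := by simp [hzdef]
      rw [e1, e2, e3, e4]; ring
    -- strict consistency gives positivity of the gaps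
    have hgap : ∀ m : Fin k, I m (t m) < I m (t m + δ) := by
      intro m
      have htm : (t m) ∈ {xm : ℝ | ∃ z ∈ A, z m = xm} := ⟨t, htA, rfl⟩
      have htmδ : (t m + δ) ∈ {xm : ℝ | ∃ z ∈ A, z m = xm} :=
        ⟨t + Pi.single m δ, hmem m, by simp⟩
      have hle' : I m (t m) ≤ I m (t m + δ) := by
        have := (hSmcons m).1 F hF (t m + δ) htmδ
        simpa [hIdef, escore, hTF] using this
      have hne' : I m (t m + δ) ≠ I m (t m) := by
        intro hEq
        have := (hSmcons m).2 F hF (t m + δ) htmδ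
          (by simpa [hIdef, escore, hTF] using hEq)
        simp only [hTF] at this
        linarith
      exact lt_of_le_of_ne hle' fun hEq => hne' hEq.symm
    -- conclude
    have ha := hgap i
    have hb := hgap j
    have hq1 : lam i * (I i (t i + δ) - I i (t i)) = lam j * (I j (t j + δ) - I j (t j)) := by
      have := key lam
      rw [← hsum lam x hx, ← hsum lam z hz, heqstar, sub_self] at this
      linarith
    have hq2 : (I i (t i + δ) - I i (t i)) = (I j (t j + δ) - I j (t j)) := by
      have := key (fun _ => 1)
      simp only [one_mul] at this
      have h2 : (∑ m, I m (x m)) - (∑ m, I m (z m)) = 0 := by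
        rw [← hsumS x hx, ← hsumS z hz, heqS, sub_self]
      rw [h2] at this
      linarith
    rw [hq2] at hq1
    exact mul_right_cancel₀ (by linarith) hq1
  · -- backward direction
    intro h
    have hc : ∃ c : ℝ, 0 < c ∧ ∀ m, lam m = c := by
      rcases Nat.eq_zero_or_pos k with hk | hk
      · subst hk; exact ⟨1, one_pos, fun m => m.elim0⟩
      · exact ⟨lam ⟨0, hk⟩, hlam _, fun m => h m ⟨0, hk⟩⟩
    obtain ⟨c, hcpos, hc⟩ := hc
    have hes : ∀ (F : Measure Ω), ∀ w ∈ A,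
        escore (fun x y => ∑ m, lam m * Sm m (x m) y) w F = c * escore S w F := by
      intro F w hw
      unfold escore
      have hfun : ∀ y, ∑ m, lam m * Sm m (w m) y = c * S w y := by
        intro y
        rw [hform w hw y, Finset.mul_sum]
        exact Finset.sum_congr rfl fun m _ => by rw [hc m]
      simp only [hfun]
      exact MeasureTheory.integral_const_mul c _
    constructor
    · intro F hF x hx z hz hn
      rw [hes F x hx, hes F z hz]
      exact mul_le_mul_of_nonneg_left (hS.1 F hF x hx z hz hn) hcpos.le
    · intro F hF x hx z hz hn
      rw [hes F x hx, hes F z hz]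
      exact mul_lt_mul_of_pos_left (hS.2 F hF x hx z hz hn) hcpos
end

section
/- Let F be a convex class of probability measures on Ω and p, q : Ω → ℝ two F-integrable functions with q̄(F) := E_F[q(Y)] > 0 for all F ∈ F. Define T : F → A ⊆ ℝ by T(F) = p̄(F)/q̄(F), and assume T is surjective onto A with int(A) ≠ ∅ convex. Then the scoring function S : A × Ω → ℝ, S(x,y) = (1/2) q(y) x² − p(y) x, and any scoring function equivalent to S, is strictly metrically F-order-sensitive for T. -/
open MeasureTheory ENNReal

/-- For a ratio of expectations `T(F) = p̄(F)/q̄(F)` with `q̄(F) > 0`,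
surjective onto `A` with `int(A) ≠ ∅` convex, the scoring function
`S(x,y) = (1/2) q(y) x² − p(y) x` (and any scoring function equivalent to it) is strictly
metrically `𝓕`-order-sensitive for `T`. -/
theorem statement11 {Ω : Type*} [MeasurableSpace Ω]
    (𝓕 : Set (Measure Ω)) (hprob : ∀ F ∈ 𝓕, IsProbabilityMeasure F)
    (hconv : MixConvex 𝓕)
    (p q : Ω → ℝ)
    (hpint : ∀ F ∈ 𝓕, Integrable p F) (hqint : ∀ F ∈ 𝓕, Integrable q F)
    (hqpos : ∀ F ∈ 𝓕, 0 < ∫ y, q y ∂F)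
    (A : Set ℝ) (T : Measure Ω → ℝ)
    (hT : ∀ F ∈ 𝓕, T F = (∫ y, p y ∂F) / (∫ y, q y ∂F))
    (hTA : ∀ F ∈ 𝓕, T F ∈ A)
    (hsurj : ∀ x ∈ A, ∃ F ∈ 𝓕, T F = x)
    (hAint : (interior A).Nonempty) (hAconv : Convex ℝ (interior A))
    (S' : ℝ → Ω → ℝ) (c : ℝ) (hc : 0 < c)
    (a : Ω → ℝ) (haint : ∀ F ∈ 𝓕, Integrable a F)
    (hS' : ∀ (x : ℝ) (y : Ω),
      S' x y = c * ((1/2) * q y * x ^ 2 - p y * x) + a y) :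
    StrictlyMetricallyOS 𝓕 A T S' (fun t => |t|) := by
  have key : ∀ F ∈ 𝓕, ∀ x : ℝ,
      escore S' x F = c * (∫ y, q y ∂F) / 2 * (x - T F)^2
        + ((∫ y, a y ∂F) - c * (∫ y, p y ∂F)^2 / (2 * ∫ y, q y ∂F)) := by
    intro F hF x
    have hq := hqint F hF
    have hp := hpint F hF
    have ha := haint F hF
    have hqne : (∫ y, q y ∂F) ≠ 0 := ne_of_gt (hqpos F hF)
    have hfun : (fun y => S' x y)
        = fun y => (c * (1/2) * x^2) * q y + ((-(c*x)) * p y + a y) := by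
      funext y; rw [hS']; ring
    have h1 : escore S' x F
        = (c * (1/2) * x^2) * (∫ y, q y ∂F)
          + ((-(c*x)) * (∫ y, p y ∂F) + ∫ y, a y ∂F) := by
      have hint1 : Integrable (fun y => (c * (1/2) * x^2) * q y) F := hq.const_mul _
      have hint2a : Integrable (fun y => (-(c*x)) * p y) F := hp.const_mul _
      have hint2 : Integrable (fun y => (-(c*x)) * p y + a y) F := hint2a.add ha
      unfold escore
      rw [hfun, integral_add hint1 hint2, integral_add hint2a ha,
        integral_const_mul, integral_const_mul]
    rw [h1, hT F hF]
    field_simp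
    ring
  constructor
  · intro F hF x hx z hz hle
    have hk : 0 < c * (∫ y, q y ∂F) / 2 := by
      have := hqpos F hF; positivity
    have h2 : (x - T F)^2 ≤ (z - T F)^2 := by
      rw [← sq_abs, ← sq_abs (z - T F)]
      exact pow_le_pow_left₀ (abs_nonneg _) hle 2
    rw [key F hF x, key F hF z]
    exact add_le_add_left (mul_le_mul_of_nonneg_left h2 hk.le) _
  · intro F hF x hx z hz hlt
    have hk : 0 < c * (∫ y, q y ∂F) / 2 := by
      have := hqpos F hF; positivity
    have h2 : (x - T F)^2 < (z - T F)^2 := by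
      rw [← sq_abs, ← sq_abs (z - T F)]
      exact pow_lt_pow_left₀ hlt (abs_nonneg _) two_ne_zero
    rw [key F hF x, key F hF z]
    exact add_lt_add_left (mul_lt_mul_of_pos_left h2 hk) _
end

section
/- Let k ≥ 2, let F be a convex class of probability measures on Ω, and let p : Ω → ℝ^k, q : Ω → ℝ be F-integrable with q̄(F) := E_F[q(Y)] > 0 for all F ∈ F. Define T : F → A ⊆ ℝ^k by T(F) = p̄(F)/q̄(F), and assume T is surjective onto A with int(A) ≠ ∅. Then the scoring function S : A × Ω → ℝ, S(x₁, …, x_k, y) = Σ_{m=1}^k ( (1/2) q(y) x_m² − p_m(y) x_m ), and any scoring function equivalent to S, is strictly metrically F-order-sensitive for T with respect to the ℓ²-norm. -/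
open MeasureTheory ENNReal

lemma lpNorm_two_sq {k : ℕ} (u : Fin k → ℝ) :
    (lpNorm 2 u) ^ 2 = ∑ i, (u i) ^ 2 := by
  have h2 : ((2 : ℝ≥0∞)).toReal = 2 := by simp
  have habs : ∀ i, |u i| ^ (2:ℝ) = (u i) ^ 2 := fun i => by
    rw [show ((2:ℝ) = ((2:ℕ):ℝ)) by norm_num, Real.rpow_natCast, sq_abs]
  have hs : (0:ℝ) ≤ ∑ i, (u i) ^ 2 := by
    apply Finset.sum_nonneg; intro i _; positivity
  have h1 : lpNorm 2 u = (∑ i, (u i) ^ 2) ^ ((1:ℝ)/2) := by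
    simp only [_root_.lpNorm, h2, if_neg (by norm_num : (2:ℝ≥0∞) ≠ ⊤)]
    rw [Finset.sum_congr rfl (fun i _ => habs i)]
  rw [h1, ← Real.rpow_natCast ((∑ i, (u i) ^ 2) ^ ((1:ℝ)/2)) 2, ← Real.rpow_mul hs]
  norm_num

lemma lpNorm_two_nonneg {k : ℕ} (u : Fin k → ℝ) : 0 ≤ lpNorm 2 u := by
  have h2 : ((2 : ℝ≥0∞)).toReal = 2 := by simp
  have hs : (0:ℝ) ≤ ∑ i, |u i| ^ (2:ℝ) := by
    apply Finset.sum_nonneg; intro i _; positivity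
  simp only [_root_.lpNorm, h2]
  norm_num
  positivity

/-- For `k ≥ 2` and a vector-valued ratio of expectations
`T(F) = p̄(F)/q̄(F)` with the same denominator `q̄(F) > 0`, surjective onto `A` with
`int(A) ≠ ∅`, the scoring function `S(x,y) = ∑ m, ((1/2) q(y) x_m² − p_m(y) x_m)` (and any
scoring function equivalent to it) is strictly metrically `𝓕`-order-sensitive for `T`
with respect to the `ℓ²`-norm. -/
theorem statement12 {Ω : Type*} [MeasurableSpace Ω] {k : ℕ} (hk : 2 ≤ k)
    (𝓕 : Set (Measure Ω)) (hprob : ∀ F ∈ 𝓕, IsProbabilityMeasure F)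
    (hconv : MixConvex 𝓕)
    (p : Ω → (Fin k → ℝ)) (q : Ω → ℝ)
    (hpint : ∀ F ∈ 𝓕, Integrable p F) (hqint : ∀ F ∈ 𝓕, Integrable q F)
    (hqpos : ∀ F ∈ 𝓕, 0 < ∫ y, q y ∂F)
    (A : Set (Fin k → ℝ)) (T : Measure Ω → (Fin k → ℝ))
    (hT : ∀ F ∈ 𝓕, T F = fun m => (∫ y, p y m ∂F) / (∫ y, q y ∂F))
    (hTA : ∀ F ∈ 𝓕, T F ∈ A)
    (hsurj : ∀ x ∈ A, ∃ F ∈ 𝓕, T F = x)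
    (hAint : (interior A).Nonempty)
    (S' : (Fin k → ℝ) → Ω → ℝ) (c : ℝ) (hc : 0 < c)
    (a : Ω → ℝ) (haint : ∀ F ∈ 𝓕, Integrable a F)
    (hS' : ∀ (x : Fin k → ℝ) (y : Ω),
      S' x y = c * (∑ m, ((1/2) * q y * (x m) ^ 2 - p y m * x m)) + a y) :
    StrictlyMetricallyOS 𝓕 A T S' (lpNorm 2) := by
  classical
  -- component integrability
  have hpm : ∀ F ∈ 𝓕, ∀ m, Integrable (fun y => p y m) F := by
    intro F hF m
    exact ((ContinuousLinearMap.proj m : (Fin k → ℝ) →L[ℝ] ℝ)).integrable_comp (hpint F hF)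
  -- basic escore formula
  have hint : ∀ F ∈ 𝓕, ∀ x : Fin k → ℝ, escore S' x F =
      c * (∑ m, ((1/2) * (∫ y, q y ∂F) * (x m) ^ 2 - (∫ y, p y m ∂F) * (x m)))
        + ∫ y, a y ∂F := by
    intro F hF x
    have hq := hqint F hF
    have ha := haint F hF
    have hterm : ∀ m : Fin k, Integrable
        (fun y => (1/2) * q y * (x m) ^ 2 - p y m * x m) F := by
      intro m
      exact ((hq.const_mul _).mul_const _).sub ((hpm F hF m).mul_const _)
    have hsum : Integrable
        (fun y => ∑ m, ((1/2) * q y * (x m) ^ 2 - p y m * x m)) F := by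
      apply integrable_finset_sum _ (fun m _ => hterm m)
    unfold escore
    simp only [hS']
    rw [integral_add ((hsum.const_mul c)) ha, integral_const_mul,
      integral_finset_sum _ (fun m _ => hterm m)]
    congr 2
    apply Finset.sum_congr rfl
    intro m _
    rw [integral_sub ((hq.const_mul _).mul_const _) ((hpm F hF m).mul_const _),
      integral_mul_const, integral_mul_const, integral_const_mul]
  -- key difference formula
  have key : ∀ F ∈ 𝓕, ∀ x z : Fin k → ℝ,
      escore S' z F - escore S' x F =
        (c * (∫ y, q y ∂F) / 2) *
          ((∑ m, (z m - T F m) ^ 2) - ∑ m, (x m - T F m) ^ 2) := by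
    intro F hF x z
    have hQ : (∫ y, q y ∂F) ≠ 0 := (hqpos F hF).ne'
    have expand : ∀ w : Fin k → ℝ,
        (c * (∫ y, q y ∂F) / 2) *
            ∑ m, (w m - (∫ y, p y m ∂F) / (∫ y, q y ∂F)) ^ 2
          = c * (∑ m, ((1/2) * (∫ y, q y ∂F) * (w m) ^ 2 - (∫ y, p y m ∂F) * (w m)))
            + (c / (2 * (∫ y, q y ∂F))) * ∑ m, (∫ y, p y m ∂F) ^ 2 := by
      intro w
      rw [Finset.mul_sum, Finset.mul_sum, Finset.mul_sum, ← Finset.sum_add_distrib]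
      apply Finset.sum_congr rfl
      intro m _
      field_simp
      ring
    rw [hint F hF x, hint F hF z, hT F hF]
    simp only
    rw [mul_sub, expand z, expand x]
    ring
  have hCpos : ∀ F ∈ 𝓕, 0 < c * (∫ y, q y ∂F) / 2 := by
    intro F hF
    have := hqpos F hF
    positivity
  have hsq : ∀ u v : Fin k → ℝ, lpNorm 2 u ≤ lpNorm 2 v →
      (∑ m, (u m) ^ 2) ≤ ∑ m, (v m) ^ 2 := by
    intro u v h
    rw [← lpNorm_two_sq, ← lpNorm_two_sq]
    exact pow_le_pow_left₀ (lpNorm_two_nonneg u) h 2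
  have hsqlt : ∀ u v : Fin k → ℝ, lpNorm 2 u < lpNorm 2 v →
      (∑ m, (u m) ^ 2) < ∑ m, (v m) ^ 2 := by
    intro u v h
    rw [← lpNorm_two_sq, ← lpNorm_two_sq]
    exact pow_lt_pow_left₀ h (lpNorm_two_nonneg u) two_ne_zero
  have hpi : ∀ (x t : Fin k → ℝ) (m : Fin k), (x - t) m = x m - t m := fun _ _ _ => rfl
  constructor
  · intro F hF x hx z hz h
    have h2 := hsq _ _ h
    simp only [hpi] at h2
    have := key F hF x z
    nlinarith [hCpos F hF, this]
  · intro F hF x hx z hz h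
    have h2 := hsqlt _ _ h
    simp only [hpi] at h2
    have := key F hF x z
    nlinarith [hCpos F hF, this]
end

section
/- Let F be a family of distribution functions on ℝ with unique medians T_{1/2} : F → ℝ and finite first moments. If every F ∈ F is symmetric around its median in the sense that F(T_{1/2}(F) + x) = 1 − F((T_{1/2}(F) − x)−) for all x ∈ ℝ (where F(u−) denotes the left limit at u), then any scoring function equivalent to the absolute loss S : ℝ × ℝ → ℝ, S(x,y) = |x − y|, is strictly metrically F-order-sensitive for the median T_{1/2}. -/
open MeasureTheory ENNReal Set

private lemma psi_nonneg (t A b y : ℝ) (hta : t ≤ A) (hab : A ≤ b) :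
    0 ≤ (|b - y| - |A - y|) + (|b - (2*t - y)| - |A - (2*t - y)|) := by
  rcases abs_cases (b - y) with h1|h1 <;> rcases abs_cases (A - y) with h2|h2 <;>
  rcases abs_cases (b - (2*t - y)) with h3|h3 <;> rcases abs_cases (A - (2*t - y)) with h4|h4 <;>
  rw [h1.1, h2.1, h3.1, h4.1] <;> linarith [h1.2, h2.2, h3.2, h4.2]

private lemma psi_ge (t A b y : ℝ) (hta : t ≤ A) (hab : A ≤ b)
    (hy1 : 2*t - (A+b)/2 ≤ y) (hy2 : y ≤ (A+b)/2) :
    b - A ≤ (|b - y| - |A - y|) + (|b - (2*t - y)| - |A - (2*t - y)|) := by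
  rcases abs_cases (b - y) with h1|h1 <;> rcases abs_cases (A - y) with h2|h2 <;>
  rcases abs_cases (b - (2*t - y)) with h3|h3 <;> rcases abs_cases (A - (2*t - y)) with h4|h4 <;>
  rw [h1.1, h2.1, h3.1, h4.1] <;> linarith [h1.2, h2.2, h3.2, h4.2]

private lemma key_lemma (μ : Measure ℝ) [IsProbabilityMeasure μ] (t : ℝ)
    (hmed1 : (μ (Set.Iio t)).toReal ≤ 1/2 ∧ 1/2 ≤ (μ (Set.Iic t)).toReal)
    (hmed2 : ∀ s : ℝ, ((μ (Set.Iio s)).toReal ≤ 1/2 ∧ 1/2 ≤ (μ (Set.Iic s)).toReal) → s = t)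
    (hmom : Integrable (fun y : ℝ => y) μ)
    (hsym : ∀ x : ℝ, (μ (Set.Iic (t + x))).toReal = 1 - (μ (Set.Iio (t - x))).toReal) :
    (∀ x z : ℝ, |x - t| ≤ |z - t| → ∫ y, |x - y| ∂μ ≤ ∫ y, |z - y| ∂μ) ∧
    (∀ x z : ℝ, |x - t| < |z - t| → ∫ y, |x - y| ∂μ < ∫ y, |z - y| ∂μ) := by
  have hint : ∀ x : ℝ, Integrable (fun y => |x - y|) μ :=
    fun x => ((integrable_const x).sub hmom).abs
  -- reflection invariance of μ
  have hmeas : Measurable (fun y : ℝ => 2*t - y) := measurable_const.sub measurable_id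
  have hmap : Measure.map (fun y : ℝ => 2*t - y) μ = μ := by
    haveI : IsProbabilityMeasure (Measure.map (fun y : ℝ => 2*t - y) μ) :=
      Measure.isProbabilityMeasure_map hmeas.aemeasurable
    refine Measure.ext_of_Iic _ _ (fun u => ?_)
    rw [Measure.map_apply hmeas measurableSet_Iic]
    have hpre : (fun y : ℝ => 2*t - y) ⁻¹' Iic u = Ici (2*t - u) := by
      ext y; simp only [mem_preimage, mem_Iic, mem_Ici]; constructor <;> intro h <;> linarith
    rw [hpre]
    have h1 : Ici (2*t - u) = (Iio (2*t - u))ᶜ := by simp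
    rw [h1, prob_compl_eq_one_sub measurableSet_Iio]
    refine (ENNReal.toReal_eq_toReal_iff' (by simp [measure_ne_top]) (measure_ne_top _ _)).mp ?_
    rw [ENNReal.toReal_sub_of_le prob_le_one one_ne_top, ENNReal.toReal_one]
    have := hsym (u - t)
    have he1 : t + (u - t) = u := by ring
    have he2 : t - (u - t) = 2*t - u := by ring
    rw [he1, he2] at this
    linarith [this]
  have hrefl : ∀ f : ℝ → ℝ, Continuous f → ∫ y, f y ∂μ = ∫ y, f (2*t - y) ∂μ := by
    intro f hf
    conv_lhs => rw [← hmap]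
    rw [integral_map hmeas.aemeasurable hf.aestronglyMeasurable]
  -- evenness
  have heven : ∀ x : ℝ, ∫ y, |x - y| ∂μ = ∫ y, |(2*t - x) - y| ∂μ := by
    intro x
    rw [hrefl (fun y => |x - y|) ((continuous_const.sub continuous_id).abs)]
    congr 1; ext y; rw [abs_sub_comm]; congr 1; ring
  -- strict monotonicity on the right of t
  have hmono : ∀ A b : ℝ, t ≤ A → A < b → ∫ y, |A - y| ∂μ < ∫ y, |b - y| ∂μ := by
    intro A b htA hAb
    set m : ℝ := (A + b)/2 with hm
    have htm : t < m := by simp only [hm]; linarith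
    -- measure of the central interval is positive
    have hFm : 1/2 < (μ (Iic m)).toReal := by
      have h1 : 1/2 ≤ (μ (Iic m)).toReal :=
        le_trans hmed1.2 (ENNReal.toReal_mono (measure_ne_top _ _)
          (measure_mono (Iic_subset_Iic.mpr htm.le)))
      rcases lt_or_eq_of_le h1 with h|h
      · exact h
      · exfalso
        have hm2 : (μ (Iio m)).toReal ≤ 1/2 := by
          rw [h]
          exact ENNReal.toReal_mono (measure_ne_top _ _) (measure_mono Iio_subset_Iic_self)
        exact absurd (hmed2 m ⟨hm2, h1⟩) (by linarith)
    have hlo : (μ (Iio (2*t - m))).toReal ≤ 1/2 :=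
      le_trans (ENNReal.toReal_mono (measure_ne_top _ _)
        (measure_mono (Iio_subset_Iio (by linarith)))) hmed1.1
    have hIcc : 0 < (μ (Icc (2*t - m) m)).toReal := by
      have hdiff : Icc (2*t - m) m = Iic m \ Iio (2*t - m) := by ext y; simp only [mem_Icc, mem_diff, mem_Iic, mem_Iio, not_lt]; tauto
      rw [hdiff, measure_diff (Iio_subset_Iic_self.trans (Iic_subset_Iic.mpr (by linarith)))
        measurableSet_Iio.nullMeasurableSet (measure_ne_top _ _),
        ENNReal.toReal_sub_of_le (measure_mono (Iio_subset_Iic_self.trans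
          (Iic_subset_Iic.mpr (by linarith)))) (measure_ne_top _ _)]
      linarith
    -- integral computation
    set φ : ℝ → ℝ := fun y => |b - y| - |A - y| with hφ
    set ψ : ℝ → ℝ := fun y => φ y + φ (2*t - y) with hψ
    have hφint : Integrable φ μ := (hint b).sub (hint A)
    have hφrefl : Integrable (fun y => φ (2*t - y)) μ := by
      have h1 : Integrable φ (Measure.map (fun y : ℝ => 2*t - y) μ) := by rwa [hmap]
      exact (integrable_map_measure h1.1 hmeas.aemeasurable).mp h1
    have hψint : Integrable ψ μ := hφint.add hφrefl
    have h2D : ∫ y, ψ y ∂μ = 2 * ∫ y, φ y ∂μ := by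
      rw [hψ]
      simp only
      rw [integral_add hφint hφrefl, ← hrefl φ (((continuous_const.sub continuous_id).abs).sub ((continuous_const.sub continuous_id).abs))]
      ring
    have hψnn : ∀ y, 0 ≤ ψ y := fun y => psi_nonneg t A b y htA hAb.le
    have hset : (b - A) * (μ (Icc (2*t - m) m)).toReal ≤ ∫ y in Icc (2*t - m) m, ψ y ∂μ := by
      refine setIntegral_ge_of_const_le_real measurableSet_Icc (measure_ne_top _ _) ?_
        hψint.integrableOn
      intro y hy
      exact psi_ge t A b y htA hAb.le hy.1 hy.2
    have hle : ∫ y in Icc (2*t - m) m, ψ y ∂μ ≤ ∫ y, ψ y ∂μ :=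
      setIntegral_le_integral hψint (Filter.Eventually.of_forall hψnn)
    have hpos : 0 < ∫ y, φ y ∂μ := by
      nlinarith [mul_pos (by linarith : (0:ℝ) < b - A) hIcc]
    have := integral_sub (hint b) (hint A)
    simp only [hφ] at hpos
    rw [integral_sub (hint b) (hint A)] at hpos
    linarith
  -- reduce general x to t + |x - t|
  have hred : ∀ x : ℝ, ∫ y, |x - y| ∂μ = ∫ y, |(t + |x - t|) - y| ∂μ := by
    intro x
    rcases le_total t x with h|h
    · rw [abs_of_nonneg (by linarith)]; congr 1; ext y; congr 2; ring
    · rw [abs_of_nonpos (by linarith), heven x]; congr 1; ext y; congr 2; ring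
  constructor
  · intro x z hxz
    rw [hred x, hred z]
    rcases eq_or_lt_of_le hxz with h|h
    · rw [h]
    · exact (hmono _ _ (le_add_of_nonneg_right (abs_nonneg _)) (by linarith)).le
  · intro x z hxz
    rw [hred x, hred z]
    exact hmono _ _ (le_add_of_nonneg_right (abs_nonneg _)) (by linarith)

/-- If all distributions in `𝓕` have unique medians `T`, finite first
moments and are symmetric around their medians, then any scoring function equivalent to
the absolute loss `S(x,y) = |x − y|` is strictly metrically `𝓕`-order-sensitive for
the median `T`. -/
theorem statement13
    (𝓕 : Set (Measure ℝ)) (hprob : ∀ μ ∈ 𝓕, IsProbabilityMeasure μ)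
    (T : Measure ℝ → ℝ)
    (hmed : ∀ μ ∈ 𝓕,
      ((μ (Set.Iio (T μ))).toReal ≤ 1/2 ∧ 1/2 ≤ (μ (Set.Iic (T μ))).toReal) ∧
      ∀ t : ℝ, ((μ (Set.Iio t)).toReal ≤ 1/2 ∧ 1/2 ≤ (μ (Set.Iic t)).toReal) → t = T μ)
    (hmom : ∀ μ ∈ 𝓕, Integrable (fun y : ℝ => y) μ)
    (hsym : ∀ μ ∈ 𝓕, ∀ x : ℝ,
      (μ (Set.Iic (T μ + x))).toReal = 1 - (μ (Set.Iio (T μ - x))).toReal)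
    (S' : ℝ → ℝ → ℝ) (c : ℝ) (hc : 0 < c)
    (a : ℝ → ℝ) (haint : ∀ μ ∈ 𝓕, Integrable a μ)
    (hS' : ∀ x y : ℝ, S' x y = c * |x - y| + a y) :
    StrictlyMetricallyOS 𝓕 Set.univ T S' (fun t => |t|) := by
  have hesc : ∀ μ ∈ 𝓕, ∀ x : ℝ,
      escore S' x μ = c * ∫ y, |x - y| ∂μ + ∫ y, a y ∂μ := by
    intro μ hμ x
    haveI := hprob μ hμ
    have hint : Integrable (fun y => |x - y|) μ := ((integrable_const x).sub (hmom μ hμ)).abs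
    unfold escore
    simp_rw [hS']
    rw [integral_add (hint.const_mul c) (haint μ hμ), integral_const_mul c]
  constructor
  · intro μ hμ x _ z _ hxz
    haveI := hprob μ hμ
    have hk := (key_lemma μ (T μ) (hmed μ hμ).1 (hmed μ hμ).2 (hmom μ hμ) (hsym μ hμ)).1 x z hxz
    rw [hesc μ hμ x, hesc μ hμ z]
    nlinarith
  · intro μ hμ x _ z _ hxz
    haveI := hprob μ hμ
    have hk := (key_lemma μ (T μ) (hmed μ hμ).1 (hmed μ hμ).2 (hmom μ hμ) (hsym μ hμ)).2 x z hxz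
    rw [hesc μ hμ x, hesc μ hμ z]
    nlinarith
end

section
/- Let T : F → A ⊆ ℝ^k be a ratio of expectations with the same denominator, T(F) = p̄(F)/q̄(F), where p : Ω → ℝ^k and q : Ω → ℝ are F-integrable with q̄(F) := E_F[q(Y)] > 0 for all F ∈ F, and A is open and convex. Let φ : A → ℝ be a strictly convex differentiable function with gradient ∇φ. Then the scoring function S(x,y) = −φ(x) q(y) + ∇φ(x)·(q(y) x − p(y)) is strictly F-order-sensitive on line segments for T. -/
open MeasureTheory ENNReal

/-- The continuous linear map `w ↦ ∑ i, g i * w i`, used to express gradients on `ℝ^k`. -/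
noncomputable def dotCLM {k : ℕ} (g : Fin k → ℝ) : (Fin k → ℝ) →L[ℝ] ℝ :=
  ∑ i, g i • (ContinuousLinearMap.proj i : (Fin k → ℝ) →L[ℝ] ℝ)

/-- For a ratio of expectations with the same denominator
`T(F) = p̄(F)/q̄(F)` (with `q̄(F) > 0`) on an open convex action domain `A`, and a strictly
convex differentiable `φ` with gradient `Dφ`, the scoring function
`S(x,y) = −φ(x) q(y) + ∇φ(x)·(q(y) x − p(y))` is strictly `𝓕`-order-sensitive on line
segments for `T`. -/
theorem statement16 {Ω : Type*} [MeasurableSpace Ω] {k : ℕ}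
    (𝓕 : Set (Measure Ω)) (hprob : ∀ F ∈ 𝓕, IsProbabilityMeasure F)
    (p : Ω → (Fin k → ℝ)) (q : Ω → ℝ)
    (hpint : ∀ F ∈ 𝓕, Integrable p F) (hqint : ∀ F ∈ 𝓕, Integrable q F)
    (hqpos : ∀ F ∈ 𝓕, 0 < ∫ y, q y ∂F)
    (A : Set (Fin k → ℝ)) (hAopen : IsOpen A) (hAconv : Convex ℝ A)
    (T : Measure Ω → (Fin k → ℝ))
    (hT : ∀ F ∈ 𝓕, T F = fun m => (∫ y, p y m ∂F) / (∫ y, q y ∂F))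
    (hTA : ∀ F ∈ 𝓕, T F ∈ A)
    (φ : (Fin k → ℝ) → ℝ) (Dφ : (Fin k → ℝ) → (Fin k → ℝ))
    (hφconv : StrictConvexOn ℝ A φ)
    (hφdiff : ∀ x ∈ A, HasFDerivAt φ (dotCLM (Dφ x)) x)
    (S : (Fin k → ℝ) → Ω → ℝ)
    (hSform : ∀ (x : Fin k → ℝ) (y : Ω),
      S x y = -(φ x) * q y + ∑ i, Dφ x i * (q y * x i - p y i)) :
    StrictlyLineSegmentOS 𝓕 A T S := by
  intro F hF v hv
  have hprobF := hprob F hF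
  have hQpos := hqpos F hF
  set Q := ∫ y, q y ∂F with hQdef
  have hQne : Q ≠ 0 := ne_of_gt hQpos
  set t := T F with htdef
  have hvne : v ≠ 0 := by
    intro h
    rw [h] at hv
    simp only [_root_.lpNorm] at hv
    simp only [Pi.zero_apply, abs_zero] at hv
    rw [Real.zero_rpow (by norm_num : ENNReal.toReal 2 ≠ 0)] at hv
    simp at hv
  have hqintF := hqint F hF
  have hpintF := hpint F hF
  have hpcomp : ∀ i, Integrable (fun y => p y i) F := fun i =>
    (ContinuousLinearMap.proj (R := ℝ) (φ := fun _ : Fin k => ℝ) i).integrable_comp hpintF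
  -- expected score formula
  have hesc : ∀ x : Fin k → ℝ, escore S x F =
      (-(φ x) + ∑ i, Dφ x i * x i) * Q - ∑ i, Dφ x i * (∫ y, p y i ∂F) := by
    intro x
    have h1 : Integrable (fun y => (-(φ x) + ∑ i, Dφ x i * x i) * q y) F :=
      hqintF.const_mul _
    have h2 : Integrable (fun y => ∑ i, Dφ x i * p y i) F :=
      integrable_finset_sum _ fun i _ => (hpcomp i).const_mul _
    have hform : ∀ y, S x y =
        (-(φ x) + ∑ i, Dφ x i * x i) * q y - ∑ i, Dφ x i * p y i := by
      intro y
      rw [hSform]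
      have : ∑ i, Dφ x i * (q y * x i - p y i)
          = ∑ i, (Dφ x i * x i * q y - Dφ x i * p y i) :=
        Finset.sum_congr rfl fun i _ => by ring
      rw [this, Finset.sum_sub_distrib, ← Finset.sum_mul]
      ring
    unfold escore
    simp only [hform]
    rw [integral_sub h1 h2, MeasureTheory.integral_const_mul,
      integral_finset_sum _ (fun i _ => (hpcomp i).const_mul _)]
    simp only [MeasureTheory.integral_const_mul]
    rw [← hQdef]
  have hti : ∀ i, ∫ y, p y i ∂F = Q * t i := by
    intro i
    rw [htdef, hT F hF]
    rw [← hQdef]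
    field_simp
  have hescQ : ∀ x : Fin k → ℝ, escore S x F
      = Q * (-(φ x) + ∑ i, Dφ x i * (x i - t i)) := by
    intro x
    rw [hesc x]
    simp only [hti]
    have e1 : ∑ i, Dφ x i * (Q * t i) = Q * ∑ i, Dφ x i * t i := by
      rw [Finset.mul_sum]; exact Finset.sum_congr rfl fun i _ => by ring
    have e2 : ∑ i, Dφ x i * (x i - t i)
        = ∑ i, Dφ x i * x i - ∑ i, Dφ x i * t i := by
      simp [mul_sub, Finset.sum_sub_distrib]
    rw [e1, e2]; ring
  -- the 1-D restriction
  set h : ℝ → ℝ := fun s => φ (t + s • v) with hhdef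
  set I : Set ℝ := {s : ℝ | t + s • v ∈ A} with hIdef
  have hkey : ∀ (a b s1 s2 : ℝ), a + b = 1 →
      t + (a * s1 + b * s2) • v = a • (t + s1 • v) + b • (t + s2 • v) := by
    intro a b s1 s2 hab
    funext i
    simp only [Pi.add_apply, Pi.smul_apply, smul_eq_mul]
    linear_combination (-t i) * hab
  have hIconv : Convex ℝ I := by
    intro s1 h1 s2 h2 a b ha hb hab
    simp only [hIdef, Set.mem_setOf_eq] at *
    have := hAconv h1 h2 ha hb hab
    rw [smul_eq_mul, smul_eq_mul, hkey a b s1 s2 hab]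
    exact this
  have hconv : StrictConvexOn ℝ I h := by
    refine ⟨hIconv, ?_⟩
    intro s1 h1 s2 h2 hne a b ha hb hab
    simp only [hIdef, Set.mem_setOf_eq] at h1 h2
    have hxne : t + s1 • v ≠ t + s2 • v := by
      intro hE
      apply hne
      have h0 : s1 • v = s2 • v := by
        have := congrArg (fun z => z - t) hE
        simpa [add_sub_cancel_left] using this
      have h0' : (s1 - s2) • v = 0 := by
        rw [sub_smul, h0, sub_self]
      rcases smul_eq_zero.mp h0' with h' | h'
      · linarith [sub_eq_zero.mp h']
      · exact absurd h' hvne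
    have hcc := hφconv.2 h1 h2 hxne ha hb hab
    simp only [hhdef, smul_eq_mul]
    rw [hkey a b s1 s2 hab]
    exact hcc
  have hD : ∀ s ∈ I, HasDerivAt h (∑ i, Dφ (t + s • v) i * v i) s := by
    intro s hs
    simp only [hIdef, Set.mem_setOf_eq] at hs
    have hc : HasDerivAt (fun s : ℝ => t + s • v) v s := by
      simpa using ((hasDerivAt_id s).smul_const v).const_add t
    have hcomp := (hφdiff _ hs).comp_hasDerivAt s hc
    have : dotCLM (Dφ (t + s • v)) v = ∑ i, Dφ (t + s • v) i * v i := by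
      simp [dotCLM, ContinuousLinearMap.sum_apply, smul_eq_mul]
    rw [← this]
    exact hcomp
  -- main argument
  intro s1 hs1 s2 hs2 hlt
  obtain ⟨hs1nn, hs1A⟩ := hs1
  obtain ⟨hs2nn, hs2A⟩ := hs2
  have hs1I : s1 ∈ I := hs1A
  have hs2I : s2 ∈ I := hs2A
  set m : ℝ := (s1 + s2) / 2 with hmdef
  have hmI : m ∈ I := by
    have h2 := hIconv hs1I hs2I (by norm_num : (0:ℝ) ≤ 1/2) (by norm_num : (0:ℝ) ≤ 1/2)
      (by norm_num : (1:ℝ)/2 + 1/2 = 1)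
    have hme : (1/2 : ℝ) • s1 + (1/2 : ℝ) • s2 = m := by
      simp only [smul_eq_mul, hmdef]; ring
    rwa [hme] at h2
  have hlt1 : s1 < m := by simp only [hmdef]; linarith
  have hlt2 : m < s2 := by simp only [hmdef]; linarith
  set D1 : ℝ := ∑ i, Dφ (t + s1 • v) i * v i with hD1def
  set D2 : ℝ := ∑ i, Dφ (t + s2 • v) i * v i with hD2def
  have A1 : (h m - h s1) / (m - s1) < (h s2 - h m) / (s2 - m) :=
    hconv.slope_strict_mono_adjacent hs1I hs2I hlt1 hlt2
  have A2 : slope h m s2 ≤ D2 :=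
    hconv.convexOn.slope_le_of_hasDerivAt hmI hs2I hlt2 (hD s2 hs2I)
  have A3 : D1 ≤ slope h s1 s2 :=
    hconv.convexOn.le_slope_of_hasDerivAt hs1I hs2I hlt (hD s1 hs1I)
  have hd1 : (0:ℝ) < m - s1 := by linarith
  have hd2 : (0:ℝ) < s2 - m := by linarith
  have hd12 : (0:ℝ) < s2 - s1 := by linarith
  rw [slope_def_field] at A2
  rw [slope_def_field] at A3
  rw [div_lt_div_iff₀ hd1 hd2] at A1
  rw [div_le_iff₀ hd2] at A2
  rw [le_div_iff₀ hd12] at A3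
  have step1 : h m - h s1 < D2 * (m - s1) := by nlinarith
  have step2 : h s2 - h s1 < D2 * (s2 - s1) := by nlinarith
  have hDle : D1 < D2 := by nlinarith
  -- rewrite the goal
  have hgoal : ∀ s : ℝ, escore S (T F + s • v) F = Q * (s * (∑ i, Dφ (t + s • v) i * v i) - h s) := by
    intro s
    rw [← htdef, hescQ (t + s • v)]
    have : ∑ i, Dφ (t + s • v) i * ((t + s • v) i - t i)
        = s * ∑ i, Dφ (t + s • v) i * v i := by
      rw [Finset.mul_sum]
      refine Finset.sum_congr rfl fun i _ => ?_
      simp only [Pi.add_apply, Pi.smul_apply, smul_eq_mul]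
      ring
    rw [this]
    simp only [hhdef]
    ring
  simp only []
  rw [hgoal s1, hgoal s2, ← hD1def, ← hD2def]
  have : s1 * D1 - h s1 < s2 * D2 - h s2 := by nlinarith
  exact mul_lt_mul_of_pos_left this hQpos
end

section
/- Let S : ℝ^k × ℝ^k → ℝ be a strictly F-consistent scoring function for T : F → ℝ^k with translation invariant score differences, i.e., S(x − z, y − z) − S(x′ − z, y − z) = S(x, y) − S(x′, y) for all x, x′, y, z ∈ ℝ^k. If the point measures δ_y belong to F for all y ∈ ℝ^k and the function y ↦ S(T(δ_y), y) is F-integrable, then S₀(x,y) := S(x,y) − S(T(δ_y), y) is a translation invariant (S₀(x − z, y − z) = S₀(x, y) for all x, y, z), non-negative, strictly F-consistent scoring function for T. -/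
open MeasureTheory ENNReal

/-- Let `S` be a strictly `𝓕`-consistent scoring function on `ℝ^k × ℝ^k`
for `T` with translation invariant score differences, suppose all Dirac measures `δ_y`
belong to `𝓕` and `y ↦ S(T(δ_y), y)` is `𝓕`-integrable. Then
`S₀(x,y) = S(x,y) − S(T(δ_y), y)` is translation invariant, non-negative, and strictly
`𝓕`-consistent for `T`. -/
theorem statement18 {k : ℕ}
    (𝓕 : Set (Measure (Fin k → ℝ)))
    (hprob : ∀ F ∈ 𝓕, IsProbabilityMeasure F)
    (T : Measure (Fin k → ℝ) → (Fin k → ℝ))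
    (S : (Fin k → ℝ) → (Fin k → ℝ) → ℝ)
    (hSint : ∀ (x : Fin k → ℝ), ∀ F ∈ 𝓕, Integrable (S x) F)
    (hS : StrictlyConsistent 𝓕 Set.univ T S)
    (htrans : ∀ x x' y z : Fin k → ℝ,
      S (x - z) (y - z) - S (x' - z) (y - z) = S x y - S x' y)
    (hdirac : ∀ y : Fin k → ℝ, Measure.dirac y ∈ 𝓕)
    (hintT : ∀ F ∈ 𝓕, Integrable (fun y => S (T (Measure.dirac y)) y) F) :
    (∀ x y z : Fin k → ℝ,
      S (x - z) (y - z) - S (T (Measure.dirac (y - z))) (y - z)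
        = S x y - S (T (Measure.dirac y)) y) ∧
    (∀ x y : Fin k → ℝ, 0 ≤ S x y - S (T (Measure.dirac y)) y) ∧
    StrictlyConsistent 𝓕 Set.univ T
      (fun x y => S x y - S (T (Measure.dirac y)) y) := by
  have hdd : ∀ y x : Fin k → ℝ, S (T (Measure.dirac y)) y ≤ S x y := by
    intro y x
    have := hS.1 (Measure.dirac y) (hdirac y) x (Set.mem_univ x)
    simpa [escore, integral_dirac] using this
  have hstr : ∀ y x : Fin k → ℝ,
      S x y = S (T (Measure.dirac y)) y → x = T (Measure.dirac y) := by
    intro y x h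
    exact hS.2 (Measure.dirac y) (hdirac y) x (Set.mem_univ x)
      (by simpa [escore, integral_dirac] using h)
  have hT : ∀ y z : Fin k → ℝ,
      T (Measure.dirac (y - z)) = T (Measure.dirac y) - z := by
    intro y z
    set w := T (Measure.dirac (y - z)) with hw
    have h1 : S (w + z) y - S (T (Measure.dirac y)) y
        = S w (y - z) - S (T (Measure.dirac y) - z) (y - z) := by
      have := htrans (w + z) (T (Measure.dirac y)) y z
      simpa [add_sub_cancel_right] using this.symm
    have h2 : S w (y - z) ≤ S (T (Measure.dirac y) - z) (y - z) := hdd (y - z) _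
    have h3 : S (T (Measure.dirac y)) y ≤ S (w + z) y := hdd y _
    have heq : S (w + z) y = S (T (Measure.dirac y)) y := le_antisymm (by linarith) h3
    have h4 := hstr y (w + z) heq
    rw [eq_sub_iff_add_eq]
    exact h4
  refine ⟨?_, ?_, ?_, ?_⟩
  · intro x y z
    rw [hT y z]
    exact htrans x (T (Measure.dirac y)) y z
  · intro x y
    have := hdd y x
    linarith
  · intro F hF x _
    have h := hS.1 F hF x (Set.mem_univ x)
    simp only [escore] at h ⊢
    rw [integral_sub (hSint _ F hF) (hintT F hF),
      integral_sub (hSint _ F hF) (hintT F hF)]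
    linarith
  · intro F hF x _ h
    apply hS.2 F hF x (Set.mem_univ x)
    simp only [escore] at h ⊢
    rw [integral_sub (hSint _ F hF) (hintT F hF),
      integral_sub (hSint _ F hF) (hintT F hF)] at h
    linarith
end

section
/- Let A ⊆ ℝ^k be such that Λ(c)x ∈ A for all c > 0 and x ∈ A, where Λ(c) is the k×k diagonal matrix with diagonal entries c, c², …, c^k. Let S : A × ℝ → ℝ be a consistent scoring function for the vector of the first k moments of the form S(x, y) = −φ(x) + ∇φ(x)·(x − (y, y², …, y^k)ᵀ) + a(y), where φ : A → ℝ is convex and differentiable with gradient ∇φ and a : ℝ → ℝ is integrable. Then S has mixed positively homogeneous score differences of degree b ∈ ℝ, i.e., S(Λ(c)x, cy) − S(Λ(c)z, cy) = c^b (S(x, y) − S(z, y)) for all x, z ∈ A, y ∈ ℝ, c > 0, if and only if for every c > 0 the map x ↦ ∇φ(Λ(c)x) Λ(c) − c^b ∇φ(x) is constant on A. -/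
open MeasureTheory ENNReal

/-- `Λ(c)` is the diagonal matrix with diagonal entries `c, c², …, c^k`, acting on `ℝ^k`. -/
def Lam {k : ℕ} (c : ℝ) (x : Fin k → ℝ) : Fin k → ℝ :=
  fun i => c ^ (i.1 + 1) * x i

lemma dotCLM_apply {k : ℕ} (g w : Fin k → ℝ) : dotCLM g w = ∑ i, g i * w i := by
  simp [dotCLM, smul_eq_mul]

noncomputable def LamCLM {k : ℕ} (c : ℝ) : (Fin k → ℝ) →L[ℝ] (Fin k → ℝ) :=
  ContinuousLinearMap.pi (fun i => (c ^ (i.1 + 1)) • (ContinuousLinearMap.proj i))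

lemma LamCLM_apply {k : ℕ} (c : ℝ) (x : Fin k → ℝ) : LamCLM c x = Lam c x := by
  funext i; simp [LamCLM, Lam]

/-- Let `A ⊆ ℝ^k` be stable under `Λ(c)`, `c > 0`, and let `S` be a
consistent scoring function for the vector of the first `k` moments of Bregman form
`S(x,y) = −φ(x) + ∇φ(x)·(x − (y, y², …, y^k)) + a(y)`, with `φ` convex differentiable with
gradient `Dφ`. Then `S` has mixed positively homogeneous score differences of degree `b`
iff for every `c > 0` the map `x ↦ ∇φ(Λ(c)x) Λ(c) − c^b ∇φ(x)` is constant on `A`. -/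
theorem statement19 {k : ℕ}
    (A : Set (Fin k → ℝ)) (hA : ∀ c : ℝ, 0 < c → ∀ x ∈ A, Lam c x ∈ A)
    (𝓕 : Set (Measure ℝ)) (hprob : ∀ F ∈ 𝓕, IsProbabilityMeasure F)
    (hmom : ∀ F ∈ 𝓕, ∀ m : Fin k, Integrable (fun y : ℝ => y ^ (m.1 + 1)) F)
    (φ : (Fin k → ℝ) → ℝ) (Dφ : (Fin k → ℝ) → (Fin k → ℝ))
    (hφconv : ConvexOn ℝ A φ)
    (hφdiff : ∀ x ∈ A, HasFDerivAt φ (dotCLM (Dφ x)) x)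
    (a : ℝ → ℝ) (haint : ∀ F ∈ 𝓕, Integrable a F)
    (S : (Fin k → ℝ) → ℝ → ℝ)
    (hSform : ∀ x ∈ A, ∀ y : ℝ,
      S x y = -(φ x) + (∑ i, Dφ x i * (x i - y ^ (i.1 + 1))) + a y)
    (hcons : Consistent 𝓕 A (fun F => fun i => ∫ y, y ^ (i.1 + 1) ∂F) S)
    (b : ℝ) :
    (∀ c : ℝ, 0 < c → ∀ x ∈ A, ∀ z ∈ A, ∀ y : ℝ,
        S (Lam c x) (c * y) - S (Lam c z) (c * y) = c ^ b * (S x y - S z y)) ↔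
      (∀ c : ℝ, 0 < c → ∀ x ∈ A, ∀ z ∈ A, ∀ i : Fin k,
        c ^ (i.1 + 1) * Dφ (Lam c x) i - c ^ b * Dφ x i
          = c ^ (i.1 + 1) * Dφ (Lam c z) i - c ^ b * Dφ z i) := by
  constructor
  · -- forward direction
    intro h c hc x hx z hz i
    have hx' := hA c hc x hx
    have hz' := hA c hc z hz
    set Δ : Fin k → ℝ := fun j =>
      c ^ (j.1 + 1) * Dφ (Lam c x) j - c ^ b * Dφ x j
        - (c ^ (j.1 + 1) * Dφ (Lam c z) j - c ^ b * Dφ z j) with hΔ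
    have key : ∀ y : ℝ, ∑ j, Δ j * y ^ (j.1 + 1) = 0 := by
      intro y
      have h1 := h c hc x hx z hz y
      have h0 := h c hc x hx z hz 0
      rw [mul_zero] at h0
      rw [hSform _ hx' (c * y), hSform _ hz' (c * y), hSform x hx y, hSform z hz y] at h1
      rw [hSform _ hx' 0, hSform _ hz' 0, hSform x hx 0, hSform z hz 0] at h0
      have split : ∀ (u v : Fin k → ℝ) (w : ℝ),
          ∑ j, Dφ u j * (v j - w ^ (j.1 + 1))
            = (∑ j, Dφ u j * v j) - ∑ j, Dφ u j * w ^ (j.1 + 1) := by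
        intro u v w
        rw [← Finset.sum_sub_distrib]
        exact Finset.sum_congr rfl fun j _ => by ring
      rw [split, split, split, split] at h1
      rw [split, split, split, split] at h0
      simp only [zero_pow (Nat.succ_ne_zero _), mul_zero, Finset.sum_const_zero,
        sub_zero] at h0
      have cpull : ∀ u : Fin k → ℝ,
          ∑ j, Dφ u j * (c * y) ^ (j.1 + 1)
            = ∑ j, (c ^ (j.1 + 1) * Dφ u j) * y ^ (j.1 + 1) := fun u =>
        Finset.sum_congr rfl fun j _ => by rw [mul_pow]; ring
      rw [cpull, cpull] at h1
      have kexp : ∑ j, Δ j * y ^ (j.1 + 1)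
          = (∑ j, (c ^ (j.1 + 1) * Dφ (Lam c x) j) * y ^ (j.1 + 1))
            - c ^ b * (∑ j, Dφ x j * y ^ (j.1 + 1))
            - ((∑ j, (c ^ (j.1 + 1) * Dφ (Lam c z) j) * y ^ (j.1 + 1))
              - c ^ b * (∑ j, Dφ z j * y ^ (j.1 + 1))) := by
        simp only [Finset.mul_sum, ← Finset.sum_sub_distrib]
        exact Finset.sum_congr rfl fun j _ => by simp only [hΔ]; ring
      rw [kexp]
      linear_combination h0 - h1
    have hΔ0 : Δ i = 0 := by
      set p : Polynomial ℝ := ∑ j : Fin k, Polynomial.C (Δ j) * Polynomial.X ^ (j.1 + 1)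
        with hp
      have hp0 : p = 0 := by
        apply Polynomial.funext
        intro r
        simp only [hp, Polynomial.eval_finset_sum, Polynomial.eval_mul, Polynomial.eval_C,
          Polynomial.eval_pow, Polynomial.eval_X, Polynomial.eval_zero]
        exact key r
      have hc1 := congrArg (fun q => Polynomial.coeff q (i.1 + 1)) hp0
      simp only [hp, Polynomial.finset_sum_coeff, Polynomial.coeff_C_mul,
        Polynomial.coeff_X_pow, Polynomial.coeff_zero, mul_ite, mul_one, mul_zero] at hc1
      rw [Finset.sum_eq_single i] at hc1
      · simpa using hc1
      · intro j _ hj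
        have hne : ¬ (j.1 + 1 = i.1 + 1) := by
          simpa [Fin.val_inj] using hj
        rw [if_neg (fun hh => hne hh.symm)]
      · simp
    simp only [hΔ] at hΔ0
    linarith
  · -- backward direction
    intro h c hc x hx z hz y
    have hx' := hA c hc x hx
    have hz' := hA c hc z hz
    set g : Fin k → ℝ := fun j => c ^ (j.1 + 1) * Dφ (Lam c z) j - c ^ b * Dφ z j with hg
    set f : (Fin k → ℝ) → ℝ :=
      fun u => φ (Lam c u) - c ^ b * φ u - ∑ j, g j * u j with hf
    -- f has zero derivative on A
    have hderiv : ∀ u ∈ A, HasFDerivWithinAt f (0 : (Fin k → ℝ) →L[ℝ] ℝ) A u := by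
      intro u hu
      have hu' := hA c hc u hu
      have d1 : HasFDerivAt (fun v => φ (Lam c v))
          ((dotCLM (Dφ (Lam c u))).comp (LamCLM c)) u := by
        have hcomp := (hφdiff _ hu').comp u (LamCLM (k := k) c).hasFDerivAt
        have he : (fun v => φ ((LamCLM (k := k) c) v)) = fun v => φ (Lam c v) := by
          funext v; rw [LamCLM_apply]
        rw [← LamCLM_apply] at hcomp
        rw [← he]
        exact hcomp
      have d2 : HasFDerivAt (fun v => c ^ b * φ v) ((c ^ b) • dotCLM (Dφ u)) u :=
        (hφdiff u hu).const_mul (c ^ b)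
      have d3 : HasFDerivAt (fun v : Fin k → ℝ => ∑ j, g j * v j) (dotCLM g) u := by
        have he : (fun v : Fin k → ℝ => ∑ j, g j * v j) = ⇑(dotCLM g) := by
          funext w; rw [dotCLM_apply]
        rw [he]
        exact (dotCLM g).hasFDerivAt
      have dall := (d1.sub d2).sub d3
      have hzero : ((dotCLM (Dφ (Lam c u))).comp (LamCLM c)
          - (c ^ b) • dotCLM (Dφ u)) - dotCLM g = 0 := by
        apply ContinuousLinearMap.ext
        intro w
        simp only [ContinuousLinearMap.sub_apply, ContinuousLinearMap.comp_apply,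
          ContinuousLinearMap.smul_apply, ContinuousLinearMap.zero_apply, smul_eq_mul,
          dotCLM_apply, LamCLM_apply]
        have e1 : ∑ j, Dφ (Lam c u) j * Lam c w j
            = ∑ j, (c ^ (j.1 + 1) * Dφ (Lam c u) j) * w j :=
          Finset.sum_congr rfl fun j _ => by simp only [Lam]; ring
        rw [e1, Finset.mul_sum, ← Finset.sum_sub_distrib, ← Finset.sum_sub_distrib]
        apply Finset.sum_eq_zero
        intro j _
        have hj := h c hc u hu z hz j
        simp only [hg]
        linear_combination w j * hj
      rw [hzero] at dall
      exact dall.hasFDerivWithinAt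
    -- constancy of f on A
    have hfeq : f x = f z := by
      have hb := hφconv.1.norm_image_sub_le_of_norm_hasFDerivWithin_le (C := 0)
        (f' := fun _ => (0 : (Fin k → ℝ) →L[ℝ] ℝ)) hderiv
        (fun u _ => by simp) hz hx
      simp only [norm_zero, zero_mul] at hb
      have := norm_le_zero_iff.mp hb
      linarith [sub_eq_zero.mp this]
    simp only [hf] at hfeq
    -- now expand the scores
    rw [hSform _ hx' (c * y), hSform _ hz' (c * y), hSform x hx y, hSform z hz y]
    have e1 : ∑ j, Dφ (Lam c x) j * (Lam c x j - (c * y) ^ (j.1 + 1))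
        = c ^ b * (∑ j, Dφ x j * (x j - y ^ (j.1 + 1)))
          + ((∑ j, g j * x j) - ∑ j, g j * y ^ (j.1 + 1)) := by
      rw [Finset.mul_sum, ← Finset.sum_sub_distrib, ← Finset.sum_add_distrib]
      refine Finset.sum_congr rfl fun j _ => ?_
      have hj := h c hc x hx z hz j
      simp only [Lam, hg, mul_pow]
      linear_combination (x j - y ^ (j.1 + 1)) * hj
    have e2 : ∑ j, Dφ (Lam c z) j * (Lam c z j - (c * y) ^ (j.1 + 1))
        = c ^ b * (∑ j, Dφ z j * (z j - y ^ (j.1 + 1)))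
          + ((∑ j, g j * z j) - ∑ j, g j * y ^ (j.1 + 1)) := by
      rw [Finset.mul_sum, ← Finset.sum_sub_distrib, ← Finset.sum_add_distrib]
      refine Finset.sum_congr rfl fun j _ => ?_
      simp only [Lam, hg, mul_pow]
      ring
    rw [e1, e2]
    linear_combination -hfeq
end
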